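/- arXiv:1209.1383 — 6 statements merged into one kernel-verified Lean document; each statement's English description precedes it below -/
import Mathlib

section
/- Let n ≥ 1 and let f : ℂ × ℝ²₊ → ℂ^{n×n} be twice continuously differentiable (holomorphic in λ, C² jointly). Then at every point (λ,x) with λ ≠ 0 and λ² + ρ² ≠ 0, the operators D_ρ and D_z commute on f: D_ρ(D_z f) = D_z(D_ρ f). -/
open Matrix

attribute [local instance] Matrix.normedAddCommGroup Matrix.normedSpace

/-- The function `ω_ρ(λ, x) = -2ρλ/(λ² + ρ²)` on `ℂ × ℝ²`. -/
noncomputable def omegaRho (p : ℂ × ℝ × ℝ) : ℂ :=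
  -2 * (p.2.1 : ℂ) * p.1 / (p.1 ^ 2 + (p.2.1 : ℂ) ^ 2)

/-- The function `ω_z(λ, x) = -2λ²/(λ² + ρ²)` on `ℂ × ℝ²`. -/
noncomputable def omegaZ (p : ℂ × ℝ × ℝ) : ℂ :=
  -2 * p.1 ^ 2 / (p.1 ^ 2 + (p.2.1 : ℂ) ^ 2)

/-- The operator `D_ρ f = ∂_ρ f − ω_ρ ∂_λ f`. -/
noncomputable def Drho {E : Type*} [NormedAddCommGroup E] [NormedSpace ℂ E]
    (f : ℂ × ℝ × ℝ → E) (p : ℂ × ℝ × ℝ) : E :=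
  fderiv ℝ f p ((0 : ℂ), (1 : ℝ), (0 : ℝ)) -
    omegaRho p • fderiv ℝ f p ((1 : ℂ), (0 : ℝ), (0 : ℝ))

/-- The operator `D_z f = ∂_z f − ω_z ∂_λ f`. -/
noncomputable def Dzop {E : Type*} [NormedAddCommGroup E] [NormedSpace ℂ E]
    (f : ℂ × ℝ × ℝ → E) (p : ℂ × ℝ × ℝ) : E :=
  fderiv ℝ f p ((0 : ℂ), (0 : ℝ), (1 : ℝ)) -
    omegaZ p • fderiv ℝ f p ((1 : ℂ), (0 : ℝ), (0 : ℝ))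

set_option maxHeartbeats 1000000 in
/-- for `f : ℂ × ℝ²₊ → ℂ^{n×n}` twice continuously differentiable and
holomorphic in `λ`, the operators `D_ρ` and `D_z` commute on `f` at every point with
`λ ≠ 0` and `λ² + ρ² ≠ 0`. -/
theorem statement0 (n : ℕ) (hn : 1 ≤ n)
    (f : ℂ × ℝ × ℝ → Matrix (Fin n) (Fin n) ℂ)
    (hf : ContDiffOn ℝ 2 f {p : ℂ × ℝ × ℝ | 0 < p.2.1})
    (hol : ∀ p ∈ {p : ℂ × ℝ × ℝ | 0 < p.2.1},
      DifferentiableAt ℂ (fun w : ℂ => f (w, p.2)) p.1)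
    (p : ℂ × ℝ × ℝ) (hp : 0 < p.2.1) (hl : p.1 ≠ 0)
    (hden : p.1 ^ 2 + (p.2.1 : ℂ) ^ 2 ≠ 0) :
    Drho (Dzop f) p = Dzop (Drho f) p := by
  have hs : IsOpen {p : ℂ × ℝ × ℝ | 0 < p.2.1} :=
    isOpen_lt continuous_const (continuous_fst.comp continuous_snd)
  have hmem : {p : ℂ × ℝ × ℝ | 0 < p.2.1} ∈ nhds p := hs.mem_nhds hp
  -- derivative of f is C¹ near p
  letI : NormedAddCommGroup (ℂ × ℝ × ℝ →L[ℝ] Matrix (Fin n) (Fin n) ℂ) :=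
    ContinuousLinearMap.toNormedAddCommGroup (E := ℂ × ℝ × ℝ) (F := Matrix (Fin n) (Fin n) ℂ)
      (σ₁₂ := RingHom.id ℝ)
  letI : NormedSpace ℝ (ℂ × ℝ × ℝ →L[ℝ] Matrix (Fin n) (Fin n) ℂ) :=
    ContinuousLinearMap.toNormedSpace (E := ℂ × ℝ × ℝ) (F := Matrix (Fin n) (Fin n) ℂ)
      (σ₁₂ := RingHom.id ℝ) (𝕜' := ℝ)
  have hF1 : ContDiffOn ℝ 1 (fderiv ℝ f) {p : ℂ × ℝ × ℝ | 0 < p.2.1} :=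
    hf.fderiv_of_isOpen (m := 1) hs (by norm_num)
  have hFd : DifferentiableAt ℝ (fderiv ℝ f) p :=
    (hF1.contDiffAt hmem).differentiableAt one_ne_zero
  have hF' : HasFDerivAt (fderiv ℝ f) (fderiv ℝ (fderiv ℝ f) p) p := hFd.hasFDerivAt
  have hsymm : ∀ v w, fderiv ℝ (fderiv ℝ f) p v w = fderiv ℝ (fderiv ℝ f) p w v :=
    (hf.contDiffAt hmem).isSymmSndFDerivAt (by simp)
  -- basic component derivatives
  have hden' : p.1 * p.1 + ((p.2.1 : ℝ) : ℂ) * ((p.2.1 : ℝ) : ℂ) ≠ 0 := by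
    simpa [pow_two] using hden
  have hA : HasFDerivAt (fun q : ℂ × ℝ × ℝ => q.1)
      (ContinuousLinearMap.fst ℝ ℂ (ℝ × ℝ)) p := hasFDerivAt_fst
  have hB : HasFDerivAt (fun q : ℂ × ℝ × ℝ => ((q.2.1 : ℝ) : ℂ))
      (Complex.ofRealCLM.comp ((ContinuousLinearMap.fst ℝ ℝ ℝ).comp
        (ContinuousLinearMap.snd ℝ ℂ (ℝ × ℝ)))) p :=
    Complex.ofRealCLM.hasFDerivAt.comp p (hasFDerivAt_snd (p := p)).fst
  have hDen := (hA.mul hA).add (hB.mul hB)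
  have h0 : HasFDerivAt (fun w : ℂ => w⁻¹)
      ((ContinuousLinearMap.smulRight (1 : ℂ →L[ℂ] ℂ)
        (-((p.1 * p.1 + ((p.2.1 : ℝ) : ℂ) * ((p.2.1 : ℝ) : ℂ)) ^ 2)⁻¹)).restrictScalars ℝ)
      (p.1 * p.1 + ((p.2.1 : ℝ) : ℂ) * ((p.2.1 : ℝ) : ℂ)) :=
    (hasFDerivAt_inv hden').restrictScalars ℝ
  have hInv := h0.comp p hDen
  -- derivatives of the omegas
  have hwz : HasFDerivAt omegaZ (_ : (ℂ × ℝ × ℝ) →L[ℝ] ℂ) p :=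
    ((((hA.mul hA).const_mul (-2 : ℂ)).mul hInv)).congr_of_eventuallyEq
      (Filter.Eventually.of_forall fun q => by
        show omegaZ q = _
        simp [omegaZ, div_eq_mul_inv, pow_two, Function.comp])
  have hwr : HasFDerivAt omegaRho (_ : (ℂ × ℝ × ℝ) →L[ℝ] ℂ) p :=
    ((((hA.mul hB).const_mul (-2 : ℂ)).mul hInv)).congr_of_eventuallyEq
      (Filter.Eventually.of_forall fun q => by
        show omegaRho q = _
        simp only [omegaRho, Function.comp, div_eq_mul_inv, Function.comp_apply, Pi.mul_apply, Pi.add_apply]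
        ring)
  -- evaluation of fderiv f at fixed directions
  have hLam : HasFDerivAt (fun q => fderiv ℝ f q ((1 : ℂ), (0 : ℝ), (0 : ℝ))) _ p :=
    hF'.clm_apply (hasFDerivAt_const ((1 : ℂ), (0 : ℝ), (0 : ℝ)) p)
  have hZ : HasFDerivAt (fun q => fderiv ℝ f q ((0 : ℂ), (0 : ℝ), (1 : ℝ))) _ p :=
    hF'.clm_apply (hasFDerivAt_const ((0 : ℂ), (0 : ℝ), (1 : ℝ)) p)
  have hR : HasFDerivAt (fun q => fderiv ℝ f q ((0 : ℂ), (1 : ℝ), (0 : ℝ))) _ p :=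
    hF'.clm_apply (hasFDerivAt_const ((0 : ℂ), (1 : ℝ), (0 : ℝ)) p)
  have hD1 : HasFDerivAt (Dzop f) (_ : (ℂ × ℝ × ℝ) →L[ℝ] Matrix (Fin n) (Fin n) ℂ) p :=
    (hZ.sub (hwz.smul hLam)).congr_of_eventuallyEq
      (Filter.Eventually.of_forall fun q => rfl)
  have hD2 : HasFDerivAt (Drho f) (_ : (ℂ × ℝ × ℝ) →L[ℝ] Matrix (Fin n) (Fin n) ℂ) p :=
    (hR.sub (hwr.smul hLam)).congr_of_eventuallyEq
      (Filter.Eventually.of_forall fun q => rfl)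
  have e1 : Drho (Dzop f) p = fderiv ℝ (Dzop f) p ((0 : ℂ), (1 : ℝ), (0 : ℝ)) -
      omegaRho p • fderiv ℝ (Dzop f) p ((1 : ℂ), (0 : ℝ), (0 : ℝ)) := rfl
  have e2 : Dzop (Drho f) p = fderiv ℝ (Drho f) p ((0 : ℂ), (0 : ℝ), (1 : ℝ)) -
      omegaZ p • fderiv ℝ (Drho f) p ((1 : ℂ), (0 : ℝ), (0 : ℝ)) := rfl
  have k1 : fderiv ℝ (Dzop f) p ((0 : ℂ), (1 : ℝ), (0 : ℝ)) =
      (fderiv ℝ f p 0 + fderiv ℝ (fderiv ℝ f) p ((0 : ℂ), (1 : ℝ), (0 : ℝ)) ((0 : ℂ), (0 : ℝ), (1 : ℝ))) -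
      (omegaZ p • (fderiv ℝ f p 0 +
        fderiv ℝ (fderiv ℝ f) p ((0 : ℂ), (1 : ℝ), (0 : ℝ)) ((1 : ℂ), (0 : ℝ), (0 : ℝ))) +
        fderiv ℝ omegaZ p ((0 : ℂ), (1 : ℝ), (0 : ℝ)) • fderiv ℝ f p ((1 : ℂ), (0 : ℝ), (0 : ℝ))) := by
    rw [hD1.fderiv, hwz.fderiv]; rfl
  have k2 : fderiv ℝ (Dzop f) p ((1 : ℂ), (0 : ℝ), (0 : ℝ)) =
      (fderiv ℝ f p 0 + fderiv ℝ (fderiv ℝ f) p ((1 : ℂ), (0 : ℝ), (0 : ℝ)) ((0 : ℂ), (0 : ℝ), (1 : ℝ))) -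
      (omegaZ p • (fderiv ℝ f p 0 +
        fderiv ℝ (fderiv ℝ f) p ((1 : ℂ), (0 : ℝ), (0 : ℝ)) ((1 : ℂ), (0 : ℝ), (0 : ℝ))) +
        fderiv ℝ omegaZ p ((1 : ℂ), (0 : ℝ), (0 : ℝ)) • fderiv ℝ f p ((1 : ℂ), (0 : ℝ), (0 : ℝ))) := by
    rw [hD1.fderiv, hwz.fderiv]; rfl
  have k3 : fderiv ℝ (Drho f) p ((0 : ℂ), (0 : ℝ), (1 : ℝ)) =
      (fderiv ℝ f p 0 + fderiv ℝ (fderiv ℝ f) p ((0 : ℂ), (0 : ℝ), (1 : ℝ)) ((0 : ℂ), (1 : ℝ), (0 : ℝ))) -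
      (omegaRho p • (fderiv ℝ f p 0 +
        fderiv ℝ (fderiv ℝ f) p ((0 : ℂ), (0 : ℝ), (1 : ℝ)) ((1 : ℂ), (0 : ℝ), (0 : ℝ))) +
        fderiv ℝ omegaRho p ((0 : ℂ), (0 : ℝ), (1 : ℝ)) • fderiv ℝ f p ((1 : ℂ), (0 : ℝ), (0 : ℝ))) := by
    rw [hD2.fderiv, hwr.fderiv]; rfl
  have k4 : fderiv ℝ (Drho f) p ((1 : ℂ), (0 : ℝ), (0 : ℝ)) =
      (fderiv ℝ f p 0 + fderiv ℝ (fderiv ℝ f) p ((1 : ℂ), (0 : ℝ), (0 : ℝ)) ((0 : ℂ), (1 : ℝ), (0 : ℝ))) -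
      (omegaRho p • (fderiv ℝ f p 0 +
        fderiv ℝ (fderiv ℝ f) p ((1 : ℂ), (0 : ℝ), (0 : ℝ)) ((1 : ℂ), (0 : ℝ), (0 : ℝ))) +
        fderiv ℝ omegaRho p ((1 : ℂ), (0 : ℝ), (0 : ℝ)) • fderiv ℝ f p ((1 : ℂ), (0 : ℝ), (0 : ℝ))) := by
    rw [hD2.fderiv, hwr.fderiv]; rfl
  rw [e1, e2, k1, k2, k3, k4, hwz.fderiv, hwr.fderiv]
  simp only [ContinuousLinearMap.add_apply, ContinuousLinearMap.sub_apply,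
    ContinuousLinearMap.smul_apply, ContinuousLinearMap.comp_apply,
    ContinuousLinearMap.flip_apply, ContinuousLinearMap.smulRight_apply,
    ContinuousLinearMap.one_apply, ContinuousLinearMap.zero_apply,
    ContinuousLinearMap.coe_fst', ContinuousLinearMap.coe_snd',
    ContinuousLinearMap.coe_restrictScalars', Complex.ofRealCLM_apply,
    map_zero, zero_add, add_zero, smul_eq_mul, Complex.ofReal_zero, Complex.ofReal_one,
    mul_zero, zero_mul, mul_one, one_mul, Function.comp]
  rw [hsymm ((0:ℂ),(1:ℝ),(0:ℝ)) ((0:ℂ),(0:ℝ),(1:ℝ)),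
    hsymm ((0:ℂ),(1:ℝ),(0:ℝ)) ((1:ℂ),(0:ℝ),(0:ℝ)),
    hsymm ((0:ℂ),(0:ℝ),(1:ℝ)) ((1:ℂ),(0:ℝ),(0:ℝ))]
  match_scalars
  · ring
  · ring
  · simp only [omegaRho, omegaZ, div_eq_mul_inv, Pi.mul_apply, Pi.add_apply, Pi.pow_apply]
    rw [show p.1 ^ 2 + ((p.2.1 : ℝ) : ℂ) ^ 2 = p.1 * p.1 + ((p.2.1 : ℝ) : ℂ) * ((p.2.1 : ℝ) : ℂ)
      from by ring]
    rw [show ((p.1 * p.1 + ((p.2.1 : ℝ) : ℂ) * ((p.2.1 : ℝ) : ℂ)) ^ 2)⁻¹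
        = (p.1 * p.1 + ((p.2.1 : ℝ) : ℂ) * ((p.2.1 : ℝ) : ℂ))⁻¹ *
          (p.1 * p.1 + ((p.2.1 : ℝ) : ℂ) * ((p.2.1 : ℝ) : ℂ))⁻¹
      from by rw [sq, mul_inv]]
    ring
  · ring
  · ring
end

section
/- (Kernel of D consists of functions of ϖ.) Let V ⊆ ℂ × ℝ²₊ be open, avoiding {λ=0} and {λ²+ρ²=0}, and let f : V → ℂ be C¹ (holomorphic in λ) with D_ρ f = 0 and D_z f = 0 on V. Let O ⊆ ℂ × ℝ²₊ be open and let λ̂ : O → ℂ be C¹ in (ϖ₀,ρ,z) satisfying the quadratic relation λ̂² − 2(z−ϖ₀)λ̂ − ρ² = 0 with (λ̂(ϖ₀,ρ,z),ρ,z) ∈ V for all (ϖ₀,ρ,z) ∈ O. Then g(ϖ₀,ρ,z) := f(λ̂(ϖ₀,ρ,z),ρ,z) satisfies ∂_ρ g = 0 and ∂_z g = 0 on O; that is, f depends only on ϖ. -/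
open Matrix

attribute [local instance] Matrix.normedAddCommGroup Matrix.normedSpace

/-- if `f` is `C¹`, holomorphic in `λ`, and `D_ρ f = D_z f = 0` on `V`, and
`λ̂(ϖ₀,ρ,z)` is a `C¹` root of the quadratic `λ̂² − 2(z−ϖ₀)λ̂ − ρ² = 0` landing in `V`,
then `g(ϖ₀,ρ,z) := f(λ̂(ϖ₀,ρ,z),ρ,z)` satisfies `∂_ρ g = 0` and `∂_z g = 0`; i.e. `f`
depends only on `ϖ`. -/
theorem statement2
    (V : Set (ℂ × ℝ × ℝ)) (hV : IsOpen V)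
    (hVgood : ∀ p ∈ V, 0 < p.2.1 ∧ p.1 ≠ 0 ∧ p.1 ^ 2 + (p.2.1 : ℂ) ^ 2 ≠ 0)
    (f : ℂ × ℝ × ℝ → ℂ) (hf : ContDiffOn ℝ 1 f V)
    (hol : ∀ p ∈ V, DifferentiableAt ℂ (fun w : ℂ => f (w, p.2)) p.1)
    (hDρ : ∀ p ∈ V, Drho f p = 0) (hDz : ∀ p ∈ V, Dzop f p = 0)
    -- the set `O` with coordinates `(ϖ₀, ρ, z)` and the root function `λ̂`
    (O : Set (ℂ × ℝ × ℝ)) (hO : IsOpen O) (hOpos : ∀ q ∈ O, 0 < q.2.1)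
    (lam : ℂ × ℝ × ℝ → ℂ) (hlam : ContDiffOn ℝ 1 lam O)
    (hroot : ∀ q ∈ O,
      (lam q) ^ 2 - 2 * ((q.2.2 : ℂ) - q.1) * lam q - (q.2.1 : ℂ) ^ 2 = 0)
    (hland : ∀ q ∈ O, (lam q, q.2) ∈ V) :
    ∀ q ∈ O,
      fderiv ℝ (fun w : ℂ × ℝ × ℝ => f (lam w, w.2)) q ((0 : ℂ), (1 : ℝ), (0 : ℝ)) = 0 ∧
      fderiv ℝ (fun w : ℂ × ℝ × ℝ => f (lam w, w.2)) q ((0 : ℂ), (0 : ℝ), (1 : ℝ)) = 0 := by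
  intro q hq
  have hpV : (lam q, q.2) ∈ V := hland q hq
  obtain ⟨hρpos, hlne, hden⟩ := hVgood _ hpV
  have hfd : DifferentiableAt ℝ f (lam q, q.2) :=
    (hf.contDiffAt (hV.mem_nhds hpV)).differentiableAt one_ne_zero
  have hlamd : DifferentiableAt ℝ lam q :=
    (hlam.contDiffAt (hO.mem_nhds hq)).differentiableAt one_ne_zero
  set L := fderiv ℝ f (lam q, q.2) with hL
  set M := fderiv ℝ lam q with hM
  -- complex linearity of L in the first slot
  have hkey : ∀ c : ℂ, L (c, (0:ℝ), (0:ℝ)) = c • L ((1:ℂ), (0:ℝ), (0:ℝ)) := by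
    have hincl : HasFDerivAt (fun w : ℂ => (w, q.2))
        ((ContinuousLinearMap.id ℝ ℂ).prod (0 : ℂ →L[ℝ] ℝ × ℝ)) (lam q) :=
      HasFDerivAt.prodMk (hasFDerivAt_id _) (hasFDerivAt_const _ _)
    have h2 : HasFDerivAt (fun w : ℂ => f (w, q.2))
        (L.comp ((ContinuousLinearMap.id ℝ ℂ).prod 0)) (lam q) :=
      hfd.hasFDerivAt.comp (lam q) hincl
    have h3 : HasFDerivAt (fun w : ℂ => f (w, q.2))
        ((fderiv ℂ (fun w : ℂ => f (w, q.2)) (lam q)).restrictScalars ℝ) (lam q) :=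
      ((hol _ hpV).hasFDerivAt).restrictScalars ℝ
    have hu := h2.unique h3
    intro c
    have e1 : L (c, (0:ℝ), (0:ℝ)) = fderiv ℂ (fun w : ℂ => f (w, q.2)) (lam q) c := by
      have h := congrArg (fun T : ℂ →L[ℝ] ℂ => T c) hu
      simp at h ⊢; exact h
    have e2 : L ((1:ℂ), (0:ℝ), (0:ℝ)) = fderiv ℂ (fun w : ℂ => f (w, q.2)) (lam q) 1 := by
      have h := congrArg (fun T : ℂ →L[ℝ] ℂ => T 1) hu
      simp at h ⊢; exact h
    rw [e1, e2, ← ContinuousLinearMap.map_smul, smul_eq_mul, mul_one]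
  -- chain rule for g
  have hG : HasFDerivAt (fun w : ℂ × ℝ × ℝ => f (lam w, w.2))
      (L.comp (M.prod (ContinuousLinearMap.snd ℝ ℂ (ℝ × ℝ)))) q :=
    hfd.hasFDerivAt.comp q (HasFDerivAt.prodMk hlamd.hasFDerivAt hasFDerivAt_snd)
  -- implicit differentiation of the quadratic relation
  set c1 : (ℂ × ℝ × ℝ) →L[ℝ] ℂ := ContinuousLinearMap.fst ℝ ℂ (ℝ × ℝ) with hc1
  set cρ : (ℂ × ℝ × ℝ) →L[ℝ] ℂ :=
    Complex.ofRealCLM.comp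
      ((ContinuousLinearMap.fst ℝ ℝ ℝ).comp (ContinuousLinearMap.snd ℝ ℂ (ℝ × ℝ))) with hcρ
  set cz : (ℂ × ℝ × ℝ) →L[ℝ] ℂ :=
    Complex.ofRealCLM.comp
      ((ContinuousLinearMap.snd ℝ ℝ ℝ).comp (ContinuousLinearMap.snd ℝ ℂ (ℝ × ℝ))) with hcz
  have h1C : HasFDerivAt (fun w : ℂ × ℝ × ℝ => w.1) c1 q := c1.hasFDerivAt
  have hρC : HasFDerivAt (fun w : ℂ × ℝ × ℝ => ((w.2.1 : ℝ) : ℂ)) cρ q := cρ.hasFDerivAt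
  have hzC : HasFDerivAt (fun w : ℂ × ℝ × ℝ => ((w.2.2 : ℝ) : ℂ)) cz q := cz.hasFDerivAt
  have hFd := ((hlamd.hasFDerivAt.mul hlamd.hasFDerivAt).sub
      (((hzC.sub h1C).const_mul (2:ℂ)).mul hlamd.hasFDerivAt)).sub (hρC.mul hρC)
  have hF0 : (fun w : ℂ × ℝ × ℝ =>
      lam w * lam w - 2 * ((w.2.2 : ℂ) - w.1) * lam w - (w.2.1 : ℂ) * (w.2.1 : ℂ))
      =ᶠ[nhds q] fun _ => (0:ℂ) := by
    filter_upwards [hO.mem_nhds hq] with w hw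
    have h := hroot w hw
    linear_combination h
  have hDF0 : fderiv ℝ (fun w : ℂ × ℝ × ℝ =>
      lam w * lam w - 2 * ((w.2.2 : ℂ) - w.1) * lam w - (w.2.1 : ℂ) * (w.2.1 : ℂ)) q = 0 := by
    rw [hF0.fderiv_eq]; simp
  have hDF : fderiv ℝ (fun w : ℂ × ℝ × ℝ =>
      lam w * lam w - 2 * ((w.2.2 : ℂ) - w.1) * lam w - (w.2.1 : ℂ) * (w.2.1 : ℂ)) q = _ :=
    hFd.fderiv
  rw [hDF0] at hDF
  -- basic algebra
  have hquad := hroot q hq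
  have hden' : lam q ^ 2 + ((q.2.1 : ℝ) : ℂ) ^ 2 ≠ 0 := hden
  have hfac : 2 * lam q * (lam q - ((q.2.2 : ℂ) - q.1)) = lam q ^ 2 + ((q.2.1 : ℝ) : ℂ) ^ 2 := by
    linear_combination hquad
  have hsub : lam q - ((q.2.2 : ℂ) - q.1) ≠ 0 := by
    intro h
    apply hden'
    rw [← hfac, h, mul_zero]
  -- directional derivative identities
  have hmρ : M ((0:ℂ), (1:ℝ), (0:ℝ)) = -omegaRho (lam q, q.2) := by
    have h := congrArg (fun T : (ℂ × ℝ × ℝ) →L[ℝ] ℂ => T ((0:ℂ), (1:ℝ), (0:ℝ))) hDF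
    simp [hc1, hcρ, hcz, smul_eq_mul] at h
    rw [← hM] at h
    rw [omegaRho]
    field_simp
    linear_combination (-(M ((0:ℂ), (1:ℝ), (0:ℝ)))) * hfac - lam q * h
  have hmz : M ((0:ℂ), (0:ℝ), (1:ℝ)) = -omegaZ (lam q, q.2) := by
    have h := congrArg (fun T : (ℂ × ℝ × ℝ) →L[ℝ] ℂ => T ((0:ℂ), (0:ℝ), (1:ℝ))) hDF
    simp [hc1, hcρ, hcz, smul_eq_mul] at h
    rw [← hM] at h
    rw [omegaZ]
    field_simp
    linear_combination (-(M ((0:ℂ), (0:ℝ), (1:ℝ)))) * hfac - lam q * h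
  have hDρ' := hDρ _ hpV
  have hDz' := hDz _ hpV
  rw [Drho] at hDρ'
  rw [Dzop] at hDz'
  rw [sub_eq_zero] at hDρ' hDz'
  constructor
  · rw [hG.fderiv]
    have hv : (M.prod (ContinuousLinearMap.snd ℝ ℂ (ℝ × ℝ))) ((0:ℂ), (1:ℝ), (0:ℝ))
        = (M ((0:ℂ), (1:ℝ), (0:ℝ)), (1:ℝ), (0:ℝ)) := by simp
    rw [ContinuousLinearMap.comp_apply, hv]
    have hsplit : ((M ((0:ℂ), (1:ℝ), (0:ℝ)), (1:ℝ), (0:ℝ)) : ℂ × ℝ × ℝ)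
        = (M ((0:ℂ), (1:ℝ), (0:ℝ)), (0:ℝ), (0:ℝ)) + ((0:ℂ), (1:ℝ), (0:ℝ)) := by
      simp
    rw [hsplit, map_add, hkey, hDρ', hmρ, ← add_smul]
    simp
  · rw [hG.fderiv]
    have hv : (M.prod (ContinuousLinearMap.snd ℝ ℂ (ℝ × ℝ))) ((0:ℂ), (0:ℝ), (1:ℝ))
        = (M ((0:ℂ), (0:ℝ), (1:ℝ)), (0:ℝ), (1:ℝ)) := by simp
    rw [ContinuousLinearMap.comp_apply, hv]
    have hsplit : ((M ((0:ℂ), (0:ℝ), (1:ℝ)), (0:ℝ), (1:ℝ)) : ℂ × ℝ × ℝ)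
        = (M ((0:ℂ), (0:ℝ), (1:ℝ)), (0:ℝ), (0:ℝ)) + ((0:ℂ), (0:ℝ), (1:ℝ)) := by
      simp
    rw [hsplit, map_add, hkey, hDz', hmz, ← add_smul]
    simp
end

section
/- The functions a(λ,x)=ρ²/(λ²+ρ²) and b(λ,x)=λ/(λ²+ρ²) satisfy, at every (λ,x) with λ ≠ 0 and λ²+ρ² ≠ 0: (i) a(0,x)=1 and b(0,x)=0; (ii) a² + ρ²b² − a = 0; (iii) Da = ρ(*Db), i.e. componentwise D_ρ a = −ρ D_z b and D_z a = ρ D_ρ b. -/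
open Matrix

attribute [local instance] Matrix.normedAddCommGroup Matrix.normedSpace

/-- `a(λ, x) = ρ²/(λ² + ρ²)`. -/
noncomputable def aF (p : ℂ × ℝ × ℝ) : ℂ :=
  (p.2.1 : ℂ) ^ 2 / (p.1 ^ 2 + (p.2.1 : ℂ) ^ 2)

/-- `b(λ, x) = λ/(λ² + ρ²)`. -/
noncomputable def bF (p : ℂ × ℝ × ℝ) : ℂ :=
  p.1 / (p.1 ^ 2 + (p.2.1 : ℂ) ^ 2)

section aux

variable (p : ℂ × ℝ × ℝ)

private lemma hcAux : HasFDerivAt (fun q : ℂ × ℝ × ℝ => ((q.2.1 : ℝ) : ℂ))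
    (Complex.ofRealCLM.comp ((ContinuousLinearMap.fst ℝ ℝ ℝ).comp
      (ContinuousLinearMap.snd ℝ ℂ (ℝ × ℝ)))) p :=
  Complex.ofRealCLM.hasFDerivAt.comp p
    (hasFDerivAt_fst.comp (g := Prod.fst) (f := Prod.snd) p hasFDerivAt_snd)

private lemma fderiv_aF (h : p.1 ^ 2 + (p.2.1 : ℂ) ^ 2 ≠ 0) (v : ℂ × ℝ × ℝ) :
    fderiv ℝ aF p v =
      (2 * (p.2.1 : ℂ) * p.1 ^ 2 * (v.2.1 : ℂ) - 2 * (p.2.1 : ℂ) ^ 2 * p.1 * v.1) /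
        (p.1 ^ 2 + (p.2.1 : ℂ) ^ 2) ^ 2 := by
  have hc := hcAux p
  have hlam : HasFDerivAt (fun q : ℂ × ℝ × ℝ => q.1)
      (ContinuousLinearMap.fst ℝ ℂ (ℝ × ℝ)) p := hasFDerivAt_fst
  have hd := (hlam.mul hlam).add (hc.mul hc)
  have hne : p.1 * p.1 + (p.2.1 : ℂ) * (p.2.1 : ℂ) ≠ 0 := by simpa [sq] using h
  have hinv := ((hasDerivAt_inv hne).hasFDerivAt.restrictScalars ℝ).comp p hd
  have ha := (hc.mul hc).mul hinv
  have heq : aF = fun q : ℂ × ℝ × ℝ =>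
      ((q.2.1 : ℂ) * (q.2.1 : ℂ)) * (q.1 * q.1 + (q.2.1 : ℂ) * (q.2.1 : ℂ))⁻¹ := by
    funext q; simp [aF, sq, div_eq_mul_inv]
  simp only [Function.comp_def, Pi.mul_def, Pi.add_def] at ha
  rw [heq, ha.fderiv]
  simp only [ContinuousLinearMap.add_apply, ContinuousLinearMap.coe_smul', Pi.smul_apply,
    ContinuousLinearMap.coe_comp', Function.comp_apply,
    ContinuousLinearMap.coe_fst', ContinuousLinearMap.coe_snd',
    ContinuousLinearMap.coe_restrictScalars', ContinuousLinearMap.smulRight_apply,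
    ContinuousLinearMap.one_apply, Complex.ofRealCLM_apply, smul_eq_mul,
    ContinuousLinearMap.toSpanSingleton_apply]
  field_simp [hne]
  ring

private lemma fderiv_bF (h : p.1 ^ 2 + (p.2.1 : ℂ) ^ 2 ≠ 0) (v : ℂ × ℝ × ℝ) :
    fderiv ℝ bF p v =
      (((p.2.1 : ℂ) ^ 2 - p.1 ^ 2) * v.1 - 2 * (p.2.1 : ℂ) * p.1 * (v.2.1 : ℂ)) /
        (p.1 ^ 2 + (p.2.1 : ℂ) ^ 2) ^ 2 := by
  have hc := hcAux p
  have hlam : HasFDerivAt (fun q : ℂ × ℝ × ℝ => q.1)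
      (ContinuousLinearMap.fst ℝ ℂ (ℝ × ℝ)) p := hasFDerivAt_fst
  have hd := (hlam.mul hlam).add (hc.mul hc)
  have hne : p.1 * p.1 + (p.2.1 : ℂ) * (p.2.1 : ℂ) ≠ 0 := by simpa [sq] using h
  have hinv := ((hasDerivAt_inv hne).hasFDerivAt.restrictScalars ℝ).comp p hd
  have hb := hlam.mul hinv
  have heq : bF = fun q : ℂ × ℝ × ℝ =>
      q.1 * (q.1 * q.1 + (q.2.1 : ℂ) * (q.2.1 : ℂ))⁻¹ := by
    funext q; simp [bF, sq, div_eq_mul_inv]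
  simp only [Function.comp_def, Pi.mul_def, Pi.add_def] at hb
  rw [heq, hb.fderiv]
  simp only [ContinuousLinearMap.add_apply, ContinuousLinearMap.coe_smul', Pi.smul_apply,
    ContinuousLinearMap.coe_comp', Function.comp_apply,
    ContinuousLinearMap.coe_fst', ContinuousLinearMap.coe_snd',
    ContinuousLinearMap.coe_restrictScalars', ContinuousLinearMap.smulRight_apply,
    ContinuousLinearMap.one_apply, Complex.ofRealCLM_apply, smul_eq_mul,
    ContinuousLinearMap.toSpanSingleton_apply]
  field_simp [hne]
  ring

end aux

/-- the functions `a = ρ²/(λ²+ρ²)` and `b = λ/(λ²+ρ²)` satisfy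
(i) `a(0,x) = 1`, `b(0,x) = 0`; (ii) `a² + ρ²b² − a = 0`;
(iii) `Da = ρ(*Db)`, i.e. `D_ρ a = −ρ D_z b` and `D_z a = ρ D_ρ b`. -/
theorem statement4 (l : ℂ) (x : ℝ × ℝ) (hρ : 0 < x.1) (hl : l ≠ 0)
    (hden : l ^ 2 + (x.1 : ℂ) ^ 2 ≠ 0) :
    aF ((0 : ℂ), x) = 1 ∧ bF ((0 : ℂ), x) = 0 ∧
    aF (l, x) ^ 2 + (x.1 : ℂ) ^ 2 * bF (l, x) ^ 2 - aF (l, x) = 0 ∧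
    Drho aF (l, x) = -(x.1 : ℂ) * Dzop bF (l, x) ∧
    Dzop aF (l, x) = (x.1 : ℂ) * Drho bF (l, x) := by
  have hx : ((x.1 : ℂ)) ≠ 0 := by
    exact_mod_cast (ne_of_gt hρ)
  refine ⟨?_, ?_, ?_, ?_, ?_⟩
  · simp [aF, div_self (pow_ne_zero 2 hx)]
  · simp [bF]
  · simp only [aF, bF]
    field_simp
    ring
  · simp only [Drho, Dzop, fderiv_aF (l, x) hden, fderiv_bF (l, x) hden,
      omegaRho, omegaZ, smul_eq_mul]
    push_cast
    field_simp
    ring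
  · simp only [Drho, Dzop, fderiv_aF (l, x) hden, fderiv_bF (l, x) hden,
      omegaRho, omegaZ, smul_eq_mul]
    push_cast
    field_simp
    ring
end

section
/- (Involutive symmetry of solutions of the Lax system.) Let Γ ∈ ℂ^{n×n} satisfy Γ² = I. Let q : U → GL(n,ℂ) be C¹ on open U ⊆ ℝ²₊ with qΓqΓ = I, set W_μ := −(∂_μ q)q⁻¹, and define Ω_ρ = aW_ρ − bρW_z, Ω_z = aW_z + bρW_ρ with a(λ,x)=ρ²/(λ²+ρ²), b(λ,x)=λ/(λ²+ρ²). Let V ⊆ ℂ × ℝ²₊ be open above U, avoiding {λ=0} and {λ²+ρ²=0}, invariant under (λ,x) ↦ (−ρ²/λ, x), and let Ψ : V → ℂ^{n×n} be C¹ (holomorphic in λ) with D_μΨ = −Ω_μΨ. Then the function Ψ'(λ,x) := q(x)·Γ·Ψ(−ρ²/λ, x)·Γ satisfies the same system: D_μΨ' = −Ω_μΨ' on V. (In particular D commutes with precomposition by T_x(λ)=−ρ²/λ: D_μ[Ψ(T_x(λ),x)] = (D_μΨ)(T_x(λ),x).) -/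
open Matrix

attribute [local instance] Matrix.normedAddCommGroup Matrix.normedSpace

section Aux

lemma matmul_bdd (n : ℕ) :
    IsBoundedBilinearMap ℝ (fun p : Matrix (Fin n) (Fin n) ℂ × Matrix (Fin n) (Fin n) ℂ =>
      p.1 * p.2) where
  add_left := fun A B C => add_mul A B C
  smul_left := fun c A B => by simp [Matrix.smul_mul]
  add_right := fun A B C => mul_add A B C
  smul_right := fun c A B => by simp [Matrix.mul_smul]
  bound := by
    refine ⟨n + 1, by positivity, fun A B => ?_⟩
    rw [Matrix.norm_le_iff (by positivity)]
    intro i j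
    calc ‖(A * B) i j‖ = ‖∑ k, A i k * B k j‖ := by rw [Matrix.mul_apply]
      _ ≤ ∑ k, ‖A i k * B k j‖ := norm_sum_le _ _
      _ ≤ ∑ _k : Fin n, ‖A‖ * ‖B‖ := by
          refine Finset.sum_le_sum fun k _ => ?_
          rw [norm_mul]
          exact mul_le_mul (A.norm_entry_le_entrywise_sup_norm)
            (B.norm_entry_le_entrywise_sup_norm) (norm_nonneg _) (norm_nonneg _)
      _ = (n : ℝ) * (‖A‖ * ‖B‖) := by simp [Finset.sum_const, mul_assoc]
      _ ≤ (n + 1) * ‖A‖ * ‖B‖ := by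
          rw [mul_assoc]
          exact mul_le_mul_of_nonneg_right (by linarith) (by positivity)

lemma HasFDerivAt.matmul {M : Type*} [NormedAddCommGroup M] [NormedSpace ℝ M] [Mul M]
    {X : Type*} [NormedAddCommGroup X] [NormedSpace ℝ X]
    {f g : X → M} {f' g'} {p : X}
    (hf : HasFDerivAt f f' p) (hB : IsBoundedBilinearMap ℝ (fun p : M × M => p.1 * p.2))
    (hg : HasFDerivAt g g' p) :
    HasFDerivAt (fun w => f w * g w)
      ((hB.deriv (f p, g p)).comp (f'.prod g')) p :=
  by have := (hB.hasFDerivAt (f p, g p)).comp p (hf.prodMk hg); exact this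

lemma fderiv_clinear {E : Type*} [NormedAddCommGroup E] [NormedSpace ℂ E]
    {f : ℂ × ℝ × ℝ → E} {p : ℂ × ℝ × ℝ}
    (hd : DifferentiableAt ℝ f p)
    (hhol : DifferentiableAt ℂ (fun w : ℂ => f (w, p.2)) p.1) (c : ℂ) :
    fderiv ℝ f p ((c : ℂ), (0 : ℝ), (0 : ℝ)) = c • fderiv ℝ f p ((1 : ℂ), (0 : ℝ), (0 : ℝ)) := by
  set g : ℂ → E := fun w => f (w, p.2) with hg
  have hL : HasFDerivAt (fun w : ℂ => ((w, p.2) : ℂ × ℝ × ℝ))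
      ((ContinuousLinearMap.id ℝ ℂ).prod 0) p.1 :=
    (hasFDerivAt_id p.1).prodMk (hasFDerivAt_const p.2 p.1)
  have h1 : HasFDerivAt g ((fderiv ℝ f p).comp ((ContinuousLinearMap.id ℝ ℂ).prod 0)) p.1 :=
    hd.hasFDerivAt.comp p.1 hL
  have h2 : HasFDerivAt g ((fderiv ℂ g p.1).restrictScalars ℝ) p.1 :=
    hhol.hasFDerivAt.restrictScalars ℝ
  have he := h1.unique h2
  have e1 : fderiv ℝ f p ((c : ℂ), (0 : ℝ), (0 : ℝ))
      = ((fderiv ℝ f p).comp ((ContinuousLinearMap.id ℝ ℂ).prod 0)) c := by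
    simp [ContinuousLinearMap.comp_apply]
    rfl
  have e2 : fderiv ℝ f p ((1 : ℂ), (0 : ℝ), (0 : ℝ))
      = ((fderiv ℝ f p).comp ((ContinuousLinearMap.id ℝ ℂ).prod 0)) 1 := by
    simp [ContinuousLinearMap.comp_apply]
    rfl
  rw [e1, e2, he]
  rw [ContinuousLinearMap.coe_restrictScalars']
  have : (c : ℂ) = c • (1 : ℂ) := by simp
  rw [this, (fderiv ℂ g p.1).map_smul c 1]
  simp

open ContinuousLinearMap in
lemma tau_fderiv {p : ℂ × ℝ × ℝ} (hp : p.1 ≠ 0) :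
    ∃ D : ℂ × ℝ × ℝ →L[ℝ] ℂ,
      HasFDerivAt (fun w : ℂ × ℝ × ℝ => -(w.2.1 : ℂ) ^ 2 / w.1) D p ∧
      D ((1 : ℂ), (0 : ℝ), (0 : ℝ)) = (p.2.1 : ℂ) ^ 2 / p.1 ^ 2 ∧
      D ((0 : ℂ), (1 : ℝ), (0 : ℝ)) = -2 * (p.2.1 : ℂ) / p.1 ∧
      D ((0 : ℂ), (0 : ℝ), (1 : ℝ)) = 0 := by
  set J : ℂ × ℝ × ℝ →L[ℝ] ℂ :=
    Complex.ofRealCLM.comp ((ContinuousLinearMap.fst ℝ ℝ ℝ).comp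
      (ContinuousLinearMap.snd ℝ ℂ (ℝ × ℝ))) with hJdef
  have hJ : HasFDerivAt (fun w : ℂ × ℝ × ℝ => ((w.2.1 : ℝ) : ℂ)) J p := J.hasFDerivAt
  have hsq : HasFDerivAt (fun w : ℂ × ℝ × ℝ => ((w.2.1 : ℂ) * (w.2.1 : ℂ)))
      ((p.2.1 : ℂ) • J + J.smulRight (p.2.1 : ℂ)) p := hJ.mul' hJ
  have hneg := hsq.neg
  have hinv : HasFDerivAt (fun w : ℂ × ℝ × ℝ => (w.1)⁻¹)
      ((-(mulLeftRight ℝ ℂ p.1⁻¹ p.1⁻¹)).comp (ContinuousLinearMap.fst ℝ ℂ (ℝ × ℝ))) p :=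
    (hasFDerivAt_inv' hp).comp p hasFDerivAt_fst
  have hmul : HasFDerivAt (fun w : ℂ × ℝ × ℝ => (-((w.2.1 : ℂ) * (w.2.1 : ℂ))) * (w.1)⁻¹) _ p :=
    hneg.mul' hinv
  have hfun : (fun w : ℂ × ℝ × ℝ => -(w.2.1 : ℂ) ^ 2 / w.1)
      = fun w : ℂ × ℝ × ℝ => (-((w.2.1 : ℂ) * (w.2.1 : ℂ))) * (w.1)⁻¹ := by
    funext w; rw [pow_two, div_eq_mul_inv]
  rw [← hfun] at hmul
  refine ⟨_, hmul, ?_, ?_, ?_⟩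
  · simp [hJdef, mulLeftRight_apply, smul_eq_mul]
    field_simp
  · simp [hJdef, mulLeftRight_apply, smul_eq_mul]
    ring
  · simp [hJdef, mulLeftRight_apply]

end Aux

/-- involutive symmetry of solutions of the Lax system: if `q` satisfies
`qΓqΓ = I`, `W_μ = −(∂_μq)q⁻¹`, `Ω_ρ = aW_ρ − bρW_z`, `Ω_z = aW_z + bρW_ρ`, and
`Ψ` solves `D_μΨ = −Ω_μΨ` on a suitable set `V` invariant under `(λ,x) ↦ (−ρ²/λ, x)`,
then `Ψ'(λ,x) := q(x)ΓΨ(−ρ²/λ,x)Γ` solves the same system on `V`. -/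
theorem statement9 (n : ℕ) (hn : 1 ≤ n)
    (Γ : Matrix (Fin n) (Fin n) ℂ) (hΓ2 : Γ * Γ = 1)
    (U : Set (ℝ × ℝ)) (hU : IsOpen U) (hUpos : ∀ x ∈ U, 0 < x.1)
    (q : ℝ × ℝ → Matrix (Fin n) (Fin n) ℂ)
    (hq : ContDiffOn ℝ 1 q U)
    (hqinv : ∀ x ∈ U, IsUnit (q x))
    (hconstraint : ∀ x ∈ U, q x * Γ * q x * Γ = 1)
    (Wρ Wz : ℝ × ℝ → Matrix (Fin n) (Fin n) ℂ)
    (hWρ : ∀ x : ℝ × ℝ, Wρ x = -(fderiv ℝ q x ((1 : ℝ), (0 : ℝ))) * (q x)⁻¹)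
    (hWz : ∀ x : ℝ × ℝ, Wz x = -(fderiv ℝ q x ((0 : ℝ), (1 : ℝ))) * (q x)⁻¹)
    (Ωρ Ωz : ℂ × ℝ × ℝ → Matrix (Fin n) (Fin n) ℂ)
    (hΩρ : ∀ p : ℂ × ℝ × ℝ, Ωρ p = aF p • Wρ p.2 - (bF p * (p.2.1 : ℂ)) • Wz p.2)
    (hΩz : ∀ p : ℂ × ℝ × ℝ, Ωz p = aF p • Wz p.2 + (bF p * (p.2.1 : ℂ)) • Wρ p.2)
    (V : Set (ℂ × ℝ × ℝ)) (hV : IsOpen V)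
    (hVU : ∀ p ∈ V, p.2 ∈ U)
    (hVgood : ∀ p ∈ V, 0 < p.2.1 ∧ p.1 ≠ 0 ∧ p.1 ^ 2 + (p.2.1 : ℂ) ^ 2 ≠ 0)
    (hVinv : ∀ p ∈ V, ((-(p.2.1 : ℂ) ^ 2 / p.1, p.2) : ℂ × ℝ × ℝ) ∈ V)
    (Ψ : ℂ × ℝ × ℝ → Matrix (Fin n) (Fin n) ℂ)
    (hΨ : ContDiffOn ℝ 1 Ψ V)
    (hΨhol : ∀ p ∈ V, DifferentiableAt ℂ (fun w : ℂ => Ψ (w, p.2)) p.1)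
    (hlaxρ : ∀ p ∈ V, Drho Ψ p = -(Ωρ p * Ψ p))
    (hlaxz : ∀ p ∈ V, Dzop Ψ p = -(Ωz p * Ψ p)) :
    ∀ p ∈ V,
      Drho (fun w : ℂ × ℝ × ℝ => q w.2 * Γ * Ψ (-(w.2.1 : ℂ) ^ 2 / w.1, w.2) * Γ) p =
        -(Ωρ p * (q p.2 * Γ * Ψ (-(p.2.1 : ℂ) ^ 2 / p.1, p.2) * Γ)) ∧
      Dzop (fun w : ℂ × ℝ × ℝ => q w.2 * Γ * Ψ (-(w.2.1 : ℂ) ^ 2 / w.1, w.2) * Γ) p =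
        -(Ωz p * (q p.2 * Γ * Ψ (-(p.2.1 : ℂ) ^ 2 / p.1, p.2) * Γ)) := by
  intro p hp
  letI : TopologicalSpace (Matrix (Fin n) (Fin n) ℂ) :=
    PseudoMetricSpace.toUniformSpace.toTopologicalSpace
  obtain ⟨hρpos, hl, hden⟩ := hVgood p hp
  have hpU : p.2 ∈ U := hVU p hp
  have hTpV : ((-(p.2.1 : ℂ) ^ 2 / p.1, p.2) : ℂ × ℝ × ℝ) ∈ V := hVinv p hp
  set Tp : ℂ × ℝ × ℝ := (-(p.2.1 : ℂ) ^ 2 / p.1, p.2) with hTpdef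
  obtain ⟨hρpos', hl', hden'⟩ := hVgood Tp hTpV
  have hρ : (p.2.1 : ℂ) ≠ 0 := Complex.ofReal_ne_zero.mpr (ne_of_gt hρpos)
  -- differentiability
  have hΨd : DifferentiableAt ℝ Ψ Tp :=
    (hΨ.differentiableOn one_ne_zero).differentiableAt (hV.mem_nhds hTpV)
  have hqd : DifferentiableAt ℝ q p.2 :=
    (hq.differentiableOn one_ne_zero).differentiableAt (hU.mem_nhds hpU)
  -- abbreviations
  set N : Matrix (Fin n) (Fin n) ℂ := Ψ Tp with hN
  set Λ : Matrix (Fin n) (Fin n) ℂ := fderiv ℝ Ψ Tp ((1 : ℂ), (0 : ℝ), (0 : ℝ)) with hΛ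
  set E1 : Matrix (Fin n) (Fin n) ℂ := fderiv ℝ Ψ Tp ((0 : ℂ), (1 : ℝ), (0 : ℝ)) with hE1
  set E3 : Matrix (Fin n) (Fin n) ℂ := fderiv ℝ Ψ Tp ((0 : ℂ), (0 : ℝ), (1 : ℝ)) with hE3
  -- the inner function F
  obtain ⟨Dτ, hτ, hτ1, hτ2, hτ3⟩ := tau_fderiv hl
  have hT : HasFDerivAt (fun w : ℂ × ℝ × ℝ => ((-(w.2.1 : ℂ) ^ 2 / w.1, w.2) : ℂ × ℝ × ℝ))
      (Dτ.prod (ContinuousLinearMap.snd ℝ ℂ (ℝ × ℝ))) p := hτ.prodMk hasFDerivAt_snd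
  have hF : HasFDerivAt (fun w : ℂ × ℝ × ℝ => Ψ (-(w.2.1 : ℂ) ^ 2 / w.1, w.2))
      ((fderiv ℝ Ψ Tp).comp (Dτ.prod (ContinuousLinearMap.snd ℝ ℂ (ℝ × ℝ)))) p :=
    hΨd.hasFDerivAt.comp p hT
  have hclin : ∀ c : ℂ, fderiv ℝ Ψ Tp ((c : ℂ), (0 : ℝ), (0 : ℝ)) = c • Λ :=
    fun c => fderiv_clinear hΨd (hΨhol Tp hTpV) c
  have hFv1 : ((fderiv ℝ Ψ Tp).comp (Dτ.prod (ContinuousLinearMap.snd ℝ ℂ (ℝ × ℝ))))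
      ((1 : ℂ), (0 : ℝ), (0 : ℝ)) = ((p.2.1 : ℂ) ^ 2 / p.1 ^ 2) • Λ := by
    simp only [ContinuousLinearMap.comp_apply, ContinuousLinearMap.prod_apply,
      ContinuousLinearMap.coe_snd']
    rw [hτ1]
    exact hclin _
  have hFv2 : ((fderiv ℝ Ψ Tp).comp (Dτ.prod (ContinuousLinearMap.snd ℝ ℂ (ℝ × ℝ))))
      ((0 : ℂ), (1 : ℝ), (0 : ℝ)) = E1 + (-2 * (p.2.1 : ℂ) / p.1) • Λ := by
    simp only [ContinuousLinearMap.comp_apply, ContinuousLinearMap.prod_apply,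
      ContinuousLinearMap.coe_snd']
    rw [hτ2]
    have hv : ((-2 * (p.2.1 : ℂ) / p.1, ((0 : ℂ), (1 : ℝ), (0 : ℝ)).2) : ℂ × ℝ × ℝ)
        = ((0 : ℂ), (1 : ℝ), (0 : ℝ)) + ((-2 * (p.2.1 : ℂ) / p.1 : ℂ), (0 : ℝ), (0 : ℝ)) := by
      simp
    rw [hv, map_add, hclin]
  have hFv3 : ((fderiv ℝ Ψ Tp).comp (Dτ.prod (ContinuousLinearMap.snd ℝ ℂ (ℝ × ℝ))))
      ((0 : ℂ), (0 : ℝ), (1 : ℝ)) = E3 := by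
    simp only [ContinuousLinearMap.comp_apply, ContinuousLinearMap.prod_apply,
      ContinuousLinearMap.coe_snd']
    rw [hτ3]
  -- scalar identities
  have hdenT : (-(p.2.1 : ℂ) ^ 2 / p.1) ^ 2 + (p.2.1 : ℂ) ^ 2 ≠ 0 := hden'
  have hden2 : (p.2.1 : ℂ) ^ 2 * p.1 ^ 3 + (p.2.1 : ℂ) ^ 4 * p.1 ≠ 0 := by
    have he : (p.2.1 : ℂ) ^ 2 * p.1 ^ 3 + (p.2.1 : ℂ) ^ 4 * p.1
        = (p.2.1 : ℂ) ^ 2 * p.1 * (p.1 ^ 2 + (p.2.1 : ℂ) ^ 2) := by ring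
    rw [he]
    exact mul_ne_zero (mul_ne_zero (pow_ne_zero 2 hρ) hl) hden
  have hden3 : (p.2.1 : ℂ) ^ 2 * p.1 ^ 2 + (p.2.1 : ℂ) ^ 4 ≠ 0 := by
    have he : (p.2.1 : ℂ) ^ 2 * p.1 ^ 2 + (p.2.1 : ℂ) ^ 4
        = (p.2.1 : ℂ) ^ 2 * (p.1 ^ 2 + (p.2.1 : ℂ) ^ 2) := by ring
    rw [he]
    exact mul_ne_zero (pow_ne_zero 2 hρ) hden
  have hsplit : (-(p.2.1 : ℂ) ^ 2 / p.1) ^ 2 + (p.2.1 : ℂ) ^ 2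
      = (p.2.1 : ℂ) ^ 2 * (p.1 ^ 2 + (p.2.1 : ℂ) ^ 2) / p.1 ^ 2 := by
    field_simp
    ring
  have hmulden : (p.2.1 : ℂ) ^ 2 * (p.1 ^ 2 + (p.2.1 : ℂ) ^ 2) ≠ 0 :=
    mul_ne_zero (pow_ne_zero 2 hρ) hden
  have hSρ : -2 * (p.2.1 : ℂ) / p.1 - omegaRho p * ((p.2.1 : ℂ) ^ 2 / p.1 ^ 2)
      = -omegaRho Tp := by
    simp only [omegaRho, hTpdef]
    rw [hsplit]
    field_simp [hmulden]
    ring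
  have hSz : -(omegaZ p * ((p.2.1 : ℂ) ^ 2 / p.1 ^ 2)) = -omegaZ Tp := by
    simp only [omegaZ, hTpdef]
    rw [hsplit]
    field_simp [hmulden]
  have hSa : aF Tp = 1 - aF p := by
    simp only [aF, hTpdef]
    rw [hsplit]
    field_simp [hmulden]
    ring
  have hSb : bF Tp * (p.2.1 : ℂ) = -(bF p * (p.2.1 : ℂ)) := by
    simp only [bF, hTpdef]
    rw [hsplit]
    field_simp [hmulden]
  have hTp2 : Tp.2 = p.2 := rfl
  -- transferred Lax equations
  have hDFρ : E1 + (-2 * (p.2.1 : ℂ) / p.1) • Λ - omegaRho p • (((p.2.1 : ℂ) ^ 2 / p.1 ^ 2) • Λ)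
      = -(Ωρ Tp * N) := by
    rw [smul_smul, add_sub_assoc, ← sub_smul, hSρ]
    have hD : Drho Ψ Tp = E1 - omegaRho Tp • Λ := rfl
    rw [neg_smul, ← sub_eq_add_neg, ← hD, hlaxρ Tp hTpV]
  have hDFz : E3 - omegaZ p • (((p.2.1 : ℂ) ^ 2 / p.1 ^ 2) • Λ) = -(Ωz Tp * N) := by
    rw [smul_smul, neg_inj.mp hSz]
    have hD : Dzop Ψ Tp = E3 - omegaZ Tp • Λ := rfl
    rw [← hD, hlaxz Tp hTpV]
  -- Ω at the reflected point
  have hΩρTp : Ωρ Tp = (1 - aF p) • Wρ p.2 + (bF p * (p.2.1 : ℂ)) • Wz p.2 := by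
    rw [hΩρ Tp, hTp2, hSa, hSb]
    simp [neg_smul, sub_neg_eq_add]
  have hΩzTp : Ωz Tp = (1 - aF p) • Wz p.2 - (bF p * (p.2.1 : ℂ)) • Wρ p.2 := by
    rw [hΩz Tp, hTp2, hSa, hSb]
    simp [neg_smul, sub_eq_add_neg]
  -- q-side algebra
  have hP2 : q p.2 * Γ * (q p.2 * Γ) = 1 := by
    rw [← mul_assoc]; exact hconstraint p.2 hpU
  have hqinv' : (q p.2)⁻¹ * q p.2 = 1 :=
    Matrix.nonsing_inv_mul _ ((Matrix.isUnit_iff_isUnit_det _).mp (hqinv p.2 hpU))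
  have hWrq : Wρ p.2 * q p.2 = -(fderiv ℝ q p.2 ((1 : ℝ), (0 : ℝ))) := by
    rw [hWρ p.2, mul_assoc, hqinv', mul_one]
    rfl
  have hWzq : Wz p.2 * q p.2 = -(fderiv ℝ q p.2 ((0 : ℝ), (1 : ℝ))) := by
    rw [hWz p.2, mul_assoc, hqinv', mul_one]
    rfl
  -- derivative of the constraint
  have hCq := ((hqd.hasFDerivAt.sub hqd.hasFDerivAt).const_add Γ).congr_fderiv (sub_self _)
  simp only [sub_self, Pi.zero_apply, add_zero] at hCq
  have hqq := ((hqd.hasFDerivAt.matmul (matmul_bdd n) hCq).matmul (matmul_bdd n) hqd.hasFDerivAt).matmul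
    (matmul_bdd n) hCq
  have hconstfd : fderiv ℝ (fun x : ℝ × ℝ => q x * Γ * q x * Γ) p.2 = 0 := by
    have hev : (fun x : ℝ × ℝ => q x * Γ * q x * Γ)
        =ᶠ[nhds p.2] (fun _ => (1 : Matrix (Fin n) (Fin n) ℂ)) :=
      Filter.eventuallyEq_of_mem (hU.mem_nhds hpU) hconstraint
    rw [hev.fderiv_eq]
    exact fderiv_const_apply 1
  have hD0 := hqq.fderiv.symm.trans hconstfd
  have hcd : ∀ v : ℝ × ℝ,
      q p.2 * Γ * (fderiv ℝ q p.2 v) * Γ + fderiv ℝ q p.2 v * Γ * q p.2 * Γ = 0 := by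
    intro v
    have h0 := congrArg
      (fun L : (ℝ × ℝ) →L[ℝ] Matrix (Fin n) (Fin n) ℂ => L v) hD0
    simp only [ContinuousLinearMap.comp_apply, ContinuousLinearMap.prod_apply,
      IsBoundedBilinearMap.deriv_apply, ContinuousLinearMap.zero_apply,
      mul_zero, zero_mul, add_zero, zero_add] at h0
    rw [add_mul] at h0
    exact h0
  have anticomm : ∀ W : Matrix (Fin n) (Fin n) ℂ, ∀ v : ℝ × ℝ,
      W * q p.2 = -(fderiv ℝ q p.2 v) →
      q p.2 * Γ * W = -(W * (q p.2 * Γ)) ∧ fderiv ℝ q p.2 v * Γ = -(W * (q p.2 * Γ)) := by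
    intro W v hWq
    have hG : fderiv ℝ q p.2 v = -(W * q p.2) := by rw [hWq, neg_neg]
    have h2 := hcd v
    rw [hG] at h2
    have hc' := hconstraint p.2 hpU
    simp only [mul_assoc] at hc'
    simp only [mul_neg, neg_mul, mul_assoc] at h2
    rw [hc', mul_one] at h2
    rw [← neg_add] at h2
    have h3 := eq_neg_of_add_eq_zero_left (neg_eq_zero.mp h2)
    have h4 := congrArg (fun X => X * (q p.2 * Γ)) h3
    simp only [mul_assoc, neg_mul] at h4
    rw [hc', mul_one] at h4
    constructor
    · simp only [mul_assoc]
      exact h4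
    · rw [hG]
      simp only [neg_mul, mul_assoc]
  obtain ⟨hPWρ, hGρΓ⟩ := anticomm (Wρ p.2) ((1 : ℝ), (0 : ℝ)) hWrq
  obtain ⟨hPWz, hGzΓ⟩ := anticomm (Wz p.2) ((0 : ℝ), (1 : ℝ)) hWzq
  have hPWρ' : q p.2 * Γ * Wρ p.2 = -(Wρ p.2 * q p.2 * Γ) := by rw [hPWρ, mul_assoc]
  have hPWz' : q p.2 * Γ * Wz p.2 = -(Wz p.2 * q p.2 * Γ) := by rw [hPWz, mul_assoc]
  have hGρΓ' : (fderiv ℝ q p.2) ((1 : ℝ), (0 : ℝ)) * Γ = -(Wρ p.2 * q p.2 * Γ) := by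
    rw [hGρΓ, mul_assoc]
  have hGzΓ' : (fderiv ℝ q p.2) ((0 : ℝ), (1 : ℝ)) * Γ = -(Wz p.2 * q p.2 * Γ) := by
    rw [hGzΓ, mul_assoc]
  have hq00 : (fderiv ℝ q p.2) ((0 : ℝ), (0 : ℝ)) = 0 := by
    exact (fderiv ℝ q p.2).map_zero
  -- derivative of the full function
  have hQ : HasFDerivAt (fun w : ℂ × ℝ × ℝ => q w.2)
      ((fderiv ℝ q p.2).comp (ContinuousLinearMap.snd ℝ ℂ (ℝ × ℝ))) p :=
    hqd.hasFDerivAt.comp p hasFDerivAt_snd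
  have hCc := ((hQ.sub hQ).const_add Γ).congr_fderiv (sub_self _)
  simp only [sub_self, Pi.zero_apply, add_zero] at hCc
  have hGG : HasFDerivAt
      (fun w : ℂ × ℝ × ℝ => q w.2 * Γ * Ψ (-(w.2.1 : ℂ) ^ 2 / w.1, w.2) * Γ) _ p :=
    ((hQ.matmul (matmul_bdd n) hCc).matmul (matmul_bdd n) hF).matmul (matmul_bdd n) hCc
  have hGfd := hGG.fderiv
  constructor
  · unfold Drho
    rw [hGfd]
    simp only [ContinuousLinearMap.comp_apply, ContinuousLinearMap.prod_apply,
      IsBoundedBilinearMap.deriv_apply, ContinuousLinearMap.zero_apply,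
      ContinuousLinearMap.coe_snd', mul_zero, zero_mul, add_zero, zero_add]
    rw [hτ1, hτ2, hq00, hclin]
    have hvρ : ((-2 * (p.2.1 : ℂ) / p.1 : ℂ), (1 : ℝ), (0 : ℝ))
        = (((0 : ℂ), (1 : ℝ), (0 : ℝ)) : ℂ × ℝ × ℝ)
          + ((-2 * (p.2.1 : ℂ) / p.1 : ℂ), (0 : ℝ), (0 : ℝ)) := by simp
    rw [hvρ, map_add, hclin, ← hTpdef, ← hN]
    simp only [zero_mul, add_zero]
    rw [← hE1]
    have key : (q p.2 * Γ * (E1 + (-2 * (p.2.1 : ℂ) / p.1) • Λ)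
          + (fderiv ℝ q p.2) ((1 : ℝ), (0 : ℝ)) * Γ * N) * Γ -
        omegaRho p • (q p.2 * Γ * ((p.2.1 : ℂ) ^ 2 / p.1 ^ 2) • Λ * Γ)
        = q p.2 * Γ * (E1 + (-2 * (p.2.1 : ℂ) / p.1) • Λ
            - omegaRho p • (((p.2.1 : ℂ) ^ 2 / p.1 ^ 2) • Λ)) * Γ
          + (fderiv ℝ q p.2) ((1 : ℝ), (0 : ℝ)) * Γ * N * Γ := by
      simp only [add_mul, sub_mul, mul_add, mul_sub, Matrix.mul_smul, Matrix.smul_mul,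
        smul_sub, smul_add]
      abel
    rw [key, hDFρ, hΩρTp, hΩρ p, hGρΓ']
    simp only [add_mul, sub_mul, mul_add, mul_sub, mul_neg, neg_mul, Matrix.smul_mul,
      Matrix.mul_smul, ← mul_assoc, sub_smul, one_smul, smul_neg, neg_neg, neg_add, neg_sub]
    simp only [hPWρ', hPWz']
    simp only [mul_neg, neg_mul, smul_neg, neg_neg, ← mul_assoc, Matrix.mul_smul,
      Matrix.smul_mul, sub_smul, one_smul]
    abel
  · unfold Dzop
    rw [hGfd]
    simp only [ContinuousLinearMap.comp_apply, ContinuousLinearMap.prod_apply,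
      IsBoundedBilinearMap.deriv_apply, ContinuousLinearMap.zero_apply,
      ContinuousLinearMap.coe_snd', mul_zero, zero_mul, add_zero, zero_add]
    rw [hτ1, hτ3, hq00, hclin, ← hTpdef, ← hN]
    simp only [zero_mul, add_zero]
    rw [← hE3]
    have key : (q p.2 * Γ * E3 + (fderiv ℝ q p.2) ((0 : ℝ), (1 : ℝ)) * Γ * N) * Γ -
        omegaZ p • (q p.2 * Γ * ((p.2.1 : ℂ) ^ 2 / p.1 ^ 2) • Λ * Γ)
        = q p.2 * Γ * (E3 - omegaZ p • (((p.2.1 : ℂ) ^ 2 / p.1 ^ 2) • Λ)) * Γ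
          + (fderiv ℝ q p.2) ((0 : ℝ), (1 : ℝ)) * Γ * N * Γ := by
      simp only [add_mul, sub_mul, mul_add, mul_sub, Matrix.mul_smul, Matrix.smul_mul,
        smul_sub, smul_add]
      abel
    rw [key, hDFz, hΩzTp, hΩz p, hGzΓ']
    simp only [add_mul, sub_mul, mul_add, mul_sub, mul_neg, neg_mul, Matrix.smul_mul,
      Matrix.mul_smul, ← mul_assoc, sub_smul, one_smul, smul_neg, neg_neg, neg_add, neg_sub]
    simp only [hPWρ', hPWz']
    simp only [mul_neg, neg_mul, smul_neg, neg_neg, ← mul_assoc, Matrix.mul_smul,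
      Matrix.smul_mul, sub_smul, one_smul]
    abel
end

section
/- (Invertibility of the dressing matrix near infinity.) Let n, N ≥ 1, let Γ ∈ ℂ^{n×n} be Hermitian with Γ² = I, and let ϖ_k = z_k + i s_k with s_k > 0, k = 1,…,N, be distinct. For x = (ρ,z) with ρ > 0 and, for each k, z ≠ z_k or ρ > s_k, let (r_k, θ_k) with r_k > 0, θ_k ∈ (0,π) be the elliptical coordinates determined by ρ = √(r_k²+s_k²)·sin θ_k and z = z_k + r_k·cos θ_k, and set λ_k(x) = (r_k − i s_k)(cos θ_k + 1), λ_{N+k}(x) = (r_k + i s_k)(cos θ_k − 1). Let v₁,…,v_N ∈ ℂⁿ satisfy Σ_{j≠k} |v_k* Γ v_j| < (1/2)|v_k* Γ v_k| for all k = 1,…,N, and set v_{N+j} = Γ v_j. Suppose S_{ij} : ℝ²₊ → ℂ^{n×n} (i,j = 1,…,2N) satisfy S_{ij}(x) → Γ as |x| → ∞. Then there exists R > 0 such that for all x with |x| > R, the elliptical coordinates are defined and the 2N×2N matrix A(x) with entries a_{ij} = (v_i* S_{ij}(x) v_j)/(λ_i(x) − conj(λ_j(x))) is strictly diagonally dominant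 (Σ_{j≠i} |a_{ij}| < |a_{ii}| for every i), and hence invertible. -/
open Matrix

attribute [local instance] Matrix.normedAddCommGroup Matrix.normedSpace

lemma elliptic_coords (ρ w s : ℝ) (hρ : 0 < ρ) (hs : 0 < s) (hbig : s ^ 2 < ρ ^ 2 + w ^ 2) :
    ∃ r θ : ℝ, 0 < r ∧ θ ∈ Set.Ioo 0 Real.pi ∧
      ρ = Real.sqrt (r ^ 2 + s ^ 2) * Real.sin θ ∧ w = r * Real.cos θ ∧
      -1 < Real.cos θ ∧ Real.cos θ < 1 ∧ ρ ^ 2 + w ^ 2 - s ^ 2 ≤ r ^ 2 := by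
  set B : ℝ := ρ ^ 2 + w ^ 2 - s ^ 2 with hBdef
  have hB : 0 < B := by linarith
  set D : ℝ := Real.sqrt (B ^ 2 + 4 * s ^ 2 * w ^ 2) with hDdef
  have hD0 : 0 ≤ D := Real.sqrt_nonneg _
  have hD2 : D ^ 2 = B ^ 2 + 4 * s ^ 2 * w ^ 2 := Real.sq_sqrt (by positivity)
  have hDB : B ≤ D := by nlinarith [sq_nonneg (s * w)]
  set r : ℝ := Real.sqrt ((B + D) / 2) with hrdef
  have hr2 : r ^ 2 = (B + D) / 2 := Real.sq_sqrt (by linarith)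
  have hr : 0 < r := Real.sqrt_pos.mpr (by linarith)
  have hquart : r ^ 2 * r ^ 2 = B * r ^ 2 + s ^ 2 * w ^ 2 := by
    rw [hr2]; nlinarith [hD2]
  have h1 : (r ^ 2 + s ^ 2) * (r ^ 2 - w ^ 2) = ρ ^ 2 * r ^ 2 := by
    linear_combination hquart
  have hw2 : w ^ 2 < r ^ 2 := by
    nlinarith [mul_pos (pow_pos hρ 2) (pow_pos hr 2), sq_nonneg s]
  set c : ℝ := w / r with hcdef
  have hc1 : -1 < c := by
    rw [hcdef, neg_lt, ← neg_div, div_lt_one hr]; nlinarith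
  have hc2 : c < 1 := by
    rw [hcdef, div_lt_one hr]; nlinarith
  refine ⟨r, Real.arccos c, hr, ⟨Real.arccos_pos.mpr hc2, ?_⟩, ?_, ?_, ?_, ?_, ?_⟩
  · rw [Real.arccos_eq_pi_div_two_sub_arcsin]
    have := Real.neg_pi_div_two_lt_arcsin.mpr hc1
    linarith
  · rw [Real.sin_arccos]
    have hc2' : (r ^ 2 + s ^ 2) * (1 - c ^ 2) = ρ ^ 2 := by
      rw [hcdef]
      field_simp
      linear_combination h1
    rw [← Real.sqrt_mul (by positivity), hc2', Real.sqrt_sq hρ.le]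
  · rw [Real.cos_arccos hc1.le hc2.le, hcdef]
    field_simp
  · rw [Real.cos_arccos hc1.le hc2.le]; exact hc1
  · rw [Real.cos_arccos hc1.le hc2.le]; exact hc2
  · have : B ≤ r ^ 2 := by rw [hr2]; linarith
    linarith

lemma dot_abs_bound {n : ℕ} (u w : Fin n → ℂ) (M : Matrix (Fin n) (Fin n) ℂ) (C : ℝ)
    (hM : ∀ a b, ‖M a b‖ ≤ C) :
    ‖star u ⬝ᵥ M.mulVec w‖ ≤
      (∑ a, ‖u a‖) * (∑ b, ‖w b‖) * C := by
  simp only [dotProduct, Matrix.mulVec, Pi.star_apply]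
  calc ‖∑ a, star (u a) * ∑ b, M a b * w b‖
      ≤ ∑ a, ‖star (u a) * ∑ b, M a b * w b‖ :=
        norm_sum_le _ _
    _ ≤ ∑ a, ‖u a‖ * (∑ b, ‖w b‖ * C) := by
        refine Finset.sum_le_sum fun a _ => ?_
        rw [norm_mul, show star (u a) = (starRingEnd ℂ) (u a) from rfl,
          Complex.norm_conj]
        refine mul_le_mul_of_nonneg_left ?_ (norm_nonneg _)
        calc ‖∑ b, M a b * w b‖ ≤ ∑ b, ‖M a b * w b‖ :=
              norm_sum_le _ _
          _ ≤ ∑ b, ‖w b‖ * C := by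
              refine Finset.sum_le_sum fun b _ => ?_
              rw [norm_mul, mul_comm]
              exact mul_le_mul_of_nonneg_left (hM a b) (norm_nonneg _)
    _ = (∑ a, ‖u a‖) * (∑ b, ‖w b‖) * C := by
        rw [← Finset.sum_mul, ← Finset.sum_mul, mul_assoc]

set_option maxHeartbeats 1600000 in
/-- invertibility of the dressing matrix near infinity: under the
diagonal-dominance condition on the constant vectors `v_k` and the convergence
`S_{ij}(x) → Γ` as `|x| → ∞`, there is `R > 0` such that for all `x ∈ ℝ²₊` with
`|x| > R` the elliptical coordinates are defined and the `2N×2N` matrix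
`A(x) = (v_i* S_{ij}(x) v_j/(λ_i(x) − conj λ_j(x)))` is strictly diagonally dominant,
hence invertible. -/
theorem statement14 (n N : ℕ) (hn : 1 ≤ n) (hN : 1 ≤ N)
    (Γ : Matrix (Fin n) (Fin n) ℂ) (hΓherm : Γ.IsHermitian) (hΓ2 : Γ * Γ = 1)
    (zc sc : Fin N → ℝ) (hsc : ∀ k, 0 < sc k)
    (hdist : ∀ j k : Fin N, j ≠ k →
      (zc j : ℂ) + (sc j : ℂ) * Complex.I ≠ (zc k : ℂ) + (sc k : ℂ) * Complex.I)
    (v : Fin N → Fin n → ℂ)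
    (hv : ∀ k : Fin N,
      ∑ j ∈ Finset.univ.erase k, ‖star (v k) ⬝ᵥ Γ.mulVec (v j)‖ <
        (1 / 2) * ‖star (v k) ⬝ᵥ Γ.mulVec (v k)‖)
    (S : (Fin N ⊕ Fin N) → (Fin N ⊕ Fin N) → ℝ × ℝ → Matrix (Fin n) (Fin n) ℂ)
    (hS : ∀ i j : Fin N ⊕ Fin N, ∀ ε > (0 : ℝ), ∃ M : ℝ, ∀ x : ℝ × ℝ, 0 < x.1 →
      M < Real.sqrt (x.1 ^ 2 + x.2 ^ 2) → ‖S i j x - Γ‖ < ε) :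
    ∃ R > (0 : ℝ), ∀ x : ℝ × ℝ, 0 < x.1 → (∀ k : Fin N, x.2 ≠ zc k ∨ sc k < x.1) →
      R < Real.sqrt (x.1 ^ 2 + x.2 ^ 2) →
      ∃ r θ : Fin N → ℝ,
        (∀ k : Fin N, 0 < r k ∧ θ k ∈ Set.Ioo 0 Real.pi ∧
          x.1 = Real.sqrt (r k ^ 2 + sc k ^ 2) * Real.sin (θ k) ∧
          x.2 = zc k + r k * Real.cos (θ k)) ∧
        (let Λ : Fin N ⊕ Fin N → ℂ := Sum.elim
            (fun k => ((r k : ℂ) - (sc k : ℂ) * Complex.I) * ((Real.cos (θ k) : ℂ) + 1))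
            (fun k => ((r k : ℂ) + (sc k : ℂ) * Complex.I) * ((Real.cos (θ k) : ℂ) - 1))
         let vv : Fin N ⊕ Fin N → Fin n → ℂ := Sum.elim v fun k => Γ.mulVec (v k)
         let A : Matrix (Fin N ⊕ Fin N) (Fin N ⊕ Fin N) ℂ := Matrix.of fun i j =>
            (star (vv i) ⬝ᵥ (S i j x).mulVec (vv j)) / (Λ i - starRingEnd ℂ (Λ j))
         (∀ i : Fin N ⊕ Fin N,
            ∑ j ∈ Finset.univ.erase i, ‖A i j‖ < ‖A i i‖) ∧
          A.det ≠ 0) := by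
  classical
  haveI hNe : Nonempty (Fin N) := ⟨⟨0, hN⟩⟩
  have k0 : Fin N := ⟨0, hN⟩
  have hΓH : Γᴴ = Γ := hΓherm
  have huniv : (Finset.univ : Finset (Fin N)).Nonempty := Finset.univ_nonempty
  have hunivS : (Finset.univ : Finset (Fin N ⊕ Fin N)).Nonempty := Finset.univ_nonempty
  set vv0 : Fin N ⊕ Fin N → Fin n → ℂ := Sum.elim v (fun k => Γ.mulVec (v k)) with hvvdef
  set g : (Fin N ⊕ Fin N) → (Fin N ⊕ Fin N) → ℝ :=
    fun i j => ‖star (vv0 i) ⬝ᵥ Γ.mulVec (vv0 j)‖ with hgdef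
  have hg_nonneg : ∀ i j, 0 ≤ g i j := fun i j => norm_nonneg _
  have hgsym : ∀ a b : Fin N, g (Sum.inr a) (Sum.inr b) = g (Sum.inl a) (Sum.inl b) := by
    intro a b
    have h1 : Γ.mulVec (Γ.mulVec (v b)) = v b := by
      rw [Matrix.mulVec_mulVec, hΓ2, Matrix.one_mulVec]
    have h2 : star (Γ.mulVec (v a)) ⬝ᵥ (v b) = star (v a) ⬝ᵥ Γ.mulVec (v b) := by
      rw [Matrix.star_mulVec, ← Matrix.dotProduct_mulVec, hΓH]
    simp only [hgdef, hvvdef, Sum.elim_inr, Sum.elim_inl, h1, h2]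
  -- constants
  set Z : ℝ := Finset.univ.sup' huniv (fun k => |zc k|) with hZdef
  have hZk : ∀ k, |zc k| ≤ Z := fun k => by
    rw [hZdef]; exact Finset.le_sup' (fun k => |zc k|) (Finset.mem_univ k)
  have hZ0 : 0 ≤ Z := le_trans (abs_nonneg _) (hZk k0)
  clear hZdef
  clear_value Z
  set Smax : ℝ := Finset.univ.sup' huniv sc with hSmdef
  have hSk : ∀ k, sc k ≤ Smax := fun k => by
    rw [hSmdef]; exact Finset.le_sup' sc (Finset.mem_univ k)
  have hSmax : 0 < Smax := lt_of_lt_of_le (hsc k0) (hSk k0)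
  clear hSmdef
  clear_value Smax
  set Cv : ℝ := Finset.univ.sup' hunivS (fun i => ∑ a, ‖vv0 i a‖) with hCvdef
  have hCvk : ∀ i, (∑ a, ‖vv0 i a‖) ≤ Cv := fun i => by
    rw [hCvdef]; exact Finset.le_sup' (fun i => ∑ a, ‖vv0 i a‖) (Finset.mem_univ i)
  have hCv0 : 0 ≤ Cv :=
    le_trans (Finset.sum_nonneg fun _ _ => norm_nonneg _) (hCvk (Sum.inl k0))
  clear hCvdef
  clear_value Cv
  set G : ℝ := Finset.univ.sup' hunivS
    (fun i => Finset.univ.sup' hunivS (fun j => g i j)) with hGdef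
  have hGk : ∀ i j, g i j ≤ G := fun i j => by
    rw [hGdef]
    exact le_trans (Finset.le_sup' (fun j => g i j) (Finset.mem_univ j))
      (Finset.le_sup' (fun i => Finset.univ.sup' hunivS (fun j => g i j)) (Finset.mem_univ i))
  have hG0 : 0 ≤ G := le_trans (hg_nonneg (Sum.inl k0) (Sum.inl k0)) (hGk (Sum.inl k0) (Sum.inl k0))
  clear hGdef
  clear_value G
  set δ : ℝ := Finset.univ.inf' huniv (fun k =>
    1 / 2 * g (Sum.inl k) (Sum.inl k)
      - ∑ j ∈ Finset.univ.erase k, g (Sum.inl k) (Sum.inl j)) with hδdef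
  have hδk : ∀ k, δ ≤ 1 / 2 * g (Sum.inl k) (Sum.inl k)
      - ∑ j ∈ Finset.univ.erase k, g (Sum.inl k) (Sum.inl j) := fun k => by
    rw [hδdef]
    exact Finset.inf'_le (fun k => 1 / 2 * g (Sum.inl k) (Sum.inl k)
      - ∑ j ∈ Finset.univ.erase k, g (Sum.inl k) (Sum.inl j)) (Finset.mem_univ k)
  have hδ : 0 < δ := by
    rw [hδdef, Finset.lt_inf'_iff]
    intro k _
    have h := hv k
    simp only [hgdef, hvvdef, Sum.elim_inl]
    linarith
  clear hδdef
  clear_value δ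
  set η : ℝ := δ / (2 * N + 2) with hηdef
  have hNc : (0:ℝ) ≤ (N:ℝ) := Nat.cast_nonneg N
  have hη : 0 < η := by
    apply div_pos hδ; linarith
  have hη2 : (2 * (N:ℝ) + 1) * η < δ := by
    rw [hηdef, mul_div_assoc', div_lt_iff₀ (by linarith : (0:ℝ) < 2 * (N:ℝ) + 2)]
    nlinarith
  clear hηdef
  clear_value η
  set T : ℝ := Z + 2 * Smax * N * (G + η) / δ + 1 with hTdef
  have hTaux : 0 ≤ 2 * Smax * N * (G + η) / δ := by
    apply div_nonneg _ hδ.le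
    have h1 : (0:ℝ) ≤ 2 * Smax := by linarith
    have h2 : (0:ℝ) ≤ G + η := by linarith
    exact mul_nonneg (mul_nonneg h1 hNc) h2
  have hTZ : Z < T := by rw [hTdef]; linarith
  have hT1 : 0 < T := by linarith
  have hden0 : (0:ℝ) < 2 * T - 2 * Z := by linarith
  have hTZ2 : 2 * T - 2 * Z = 4 * Smax * (N:ℝ) * (G + η) / δ + 2 := by
    rw [hTdef]; field_simp; ring
  have hcross : 2 * Smax * ((N:ℝ) * (G + η) / (2 * T - 2 * Z)) < δ / 2 := by
    have h2 : 2 * Smax * ((N:ℝ) * (G + η)) < δ / 2 * (2 * T - 2 * Z) := by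
      have h3 : δ / 2 * (2 * T - 2 * Z) = 2 * Smax * N * (G + η) + δ := by
        rw [hTZ2]; field_simp; ring
      rw [h3]; nlinarith
    calc 2 * Smax * ((N:ℝ) * (G + η) / (2 * T - 2 * Z))
        = 2 * Smax * ((N:ℝ) * (G + η)) / (2 * T - 2 * Z) := by ring
      _ < δ / 2 := by rw [div_lt_iff₀ hden0]; linarith
  clear hTdef hTZ2
  clear_value T
  set ε : ℝ := η / (Cv ^ 2 + 1) with hεdef
  have hεpos : 0 < ε := div_pos hη (by positivity)
  have hεCv : Cv * Cv * ε ≤ η := by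
    rw [hεdef, mul_div_assoc', div_le_iff₀ (by positivity : (0:ℝ) < Cv ^ 2 + 1)]
    nlinarith
  clear hεdef
  clear_value ε
  choose M hM using fun i j => hS i j ε hεpos
  set R : ℝ := max (2 * Z + Smax + T + 1)
    (Finset.univ.sup' hunivS fun i => Finset.univ.sup' hunivS fun j => M i j) with hRdef
  have hR1 : 2 * Z + Smax + T + 1 ≤ R := le_max_left _ _
  have hRM : ∀ i j, M i j ≤ R := fun i j => by
    rw [hRdef]
    refine le_trans (le_trans (Finset.le_sup' (fun j => M i j) (Finset.mem_univ j))
      (Finset.le_sup' (fun i => Finset.univ.sup' hunivS fun j => M i j) (Finset.mem_univ i)))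
      (le_max_right _ _)
  clear hRdef
  clear_value R
  have hRpos : 0 < R := by linarith
  refine ⟨R, hRpos, ?_⟩
  intro x hx1 _hx2 hxR
  set L : ℝ := Real.sqrt (x.1 ^ 2 + x.2 ^ 2) with hLdef
  have hL2 : L ^ 2 = x.1 ^ 2 + x.2 ^ 2 := Real.sq_sqrt (by positivity)
  have hL0 : 0 < L := lt_trans hRpos hxR
  have hx2L : |x.2| ≤ L := by
    rw [hLdef, show |x.2| = Real.sqrt (x.2 ^ 2) from (Real.sqrt_sq_eq_abs _).symm]
    exact Real.sqrt_le_sqrt (by nlinarith [sq_nonneg x.1])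
  clear_value L
  have hbigk : ∀ k, sc k ^ 2 + T ^ 2 < x.1 ^ 2 + (x.2 - zc k) ^ 2 := by
    intro k
    have h1 : x.2 * zc k ≤ L * Z := by
      calc x.2 * zc k ≤ |x.2 * zc k| := le_abs_self _
        _ = |x.2| * |zc k| := abs_mul _ _
        _ ≤ L * Z := mul_le_mul hx2L (hZk k) (abs_nonneg _) hL0.le
    have h2 : L ^ 2 - 2 * (L * Z) ≤ x.1 ^ 2 + (x.2 - zc k) ^ 2 := by
      nlinarith only [hL2, h1, sq_nonneg (zc k)]
    have hLbig : 2 * Z + Smax + T + 1 < L := lt_of_le_of_lt hR1 hxR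
    have hu : 0 < L - 2 * Z - Smax - T - 1 := by linarith
    have huz : 0 < L - 2 * Z := by linarith
    have h3 : Smax ^ 2 + T ^ 2 < L ^ 2 - 2 * (L * Z) := by
      nlinarith only [hu, huz, hZ0, hSmax, hT1, mul_pos hu huz, mul_nonneg hZ0 huz.le,
        sq_nonneg (Smax - T), sq_nonneg (Smax + T)]
    have h4 : sc k ^ 2 ≤ Smax ^ 2 := by nlinarith only [hsc k, hSk k]
    linarith only [h2, h3, h4]
  have hco : ∀ k : Fin N, ∃ r θ : ℝ, 0 < r ∧ θ ∈ Set.Ioo 0 Real.pi ∧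
      x.1 = Real.sqrt (r ^ 2 + sc k ^ 2) * Real.sin θ ∧ (x.2 - zc k) = r * Real.cos θ ∧
      -1 < Real.cos θ ∧ Real.cos θ < 1 ∧
      x.1 ^ 2 + (x.2 - zc k) ^ 2 - sc k ^ 2 ≤ r ^ 2 :=
    fun k => elliptic_coords x.1 (x.2 - zc k) (sc k) hx1 (hsc k)
      (by linarith only [hbigk k, sq_nonneg T])
  choose r θ hr hθmem hρeq hweq hc1 hc2 hrbig using hco
  have hrT : ∀ k, T ≤ r k := by
    intro k
    have h1 := hrbig k
    have h2 := hbigk k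
    nlinarith only [h1, h2, hT1, hr k]
  refine ⟨r, θ, fun k => ⟨hr k, hθmem k, hρeq k, by linarith [hweq k]⟩, ?_⟩
  intro Λ vvL A
  have hA : ∀ i j, A i j =
      (star (vv0 i) ⬝ᵥ (S i j x).mulVec (vv0 j)) / (Λ i - (starRingEnd ℂ) (Λ j)) :=
    fun i j => rfl
  set ee : Fin N ⊕ Fin N → ℝ :=
    Sum.elim (fun k => (x.2 - zc k) + r k) (fun k => (x.2 - zc k) - r k) with heedef
  set mm : Fin N ⊕ Fin N → ℝ :=
    Sum.elim (fun k => sc k * (Real.cos (θ k) + 1)) (fun k => sc k * (1 - Real.cos (θ k)))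
    with hmmdef
  have hmm_pos : ∀ i, 0 < mm i := by
    rintro (k | k) <;> simp only [hmmdef, Sum.elim_inl, Sum.elim_inr] <;>
      nlinarith only [hsc k, hc1 k, hc2 k]
  have hmm_le : ∀ i, mm i ≤ 2 * Smax := by
    rintro (k | k) <;> simp only [hmmdef, Sum.elim_inl, Sum.elim_inr] <;>
      nlinarith only [hSk k, hsc k, hc1 k, hc2 k, hSmax]
  have hΛe : ∀ i, Λ i = ((ee i : ℝ) : ℂ) - ((mm i : ℝ) : ℂ) * Complex.I := by
    rintro (k | k)
    · show ((r k : ℂ) - (sc k : ℂ) * Complex.I) * ((Real.cos (θ k) : ℂ) + 1) = _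
      simp only [heedef, hmmdef, Sum.elim_inl]
      rw [hweq k]
      push_cast
      ring
    · show ((r k : ℂ) + (sc k : ℂ) * Complex.I) * ((Real.cos (θ k) : ℂ) - 1) = _
      simp only [heedef, hmmdef, Sum.elim_inr]
      rw [hweq k]
      push_cast
      ring
  have hden : ∀ i j, Λ i - (starRingEnd ℂ) (Λ j)
      = ((ee i - ee j : ℝ) : ℂ) - ((mm i + mm j : ℝ) : ℂ) * Complex.I := by
    intro i j
    rw [hΛe i, hΛe j, map_sub, _root_.map_mul, Complex.conj_ofReal, Complex.conj_ofReal,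
      Complex.conj_I]
    push_cast
    ring
  set d : (Fin N ⊕ Fin N) → (Fin N ⊕ Fin N) → ℝ :=
    fun i j => ‖Λ i - (starRingEnd ℂ) (Λ j)‖ with hddef
  have habsd : ∀ i j, d i j = Real.sqrt ((ee i - ee j) ^ 2 + (mm i + mm j) ^ 2) := by
    intro i j
    have h1 : Λ i - (starRingEnd ℂ) (Λ j)
        = ((ee i - ee j : ℝ) : ℂ) + ((-(mm i + mm j) : ℝ) : ℂ) * Complex.I := by
      rw [hden i j]; push_cast; ring
    simp only [hddef]
    rw [h1, Complex.norm_add_mul_I]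
    congr 1
    ring
  have hd_ge_m : ∀ i j, mm i + mm j ≤ d i j := by
    intro i j
    rw [habsd]
    calc mm i + mm j = Real.sqrt ((mm i + mm j) ^ 2) :=
          (Real.sqrt_sq (by linarith only [hmm_pos i, hmm_pos j])).symm
      _ ≤ _ := Real.sqrt_le_sqrt (by nlinarith only [sq_nonneg (ee i - ee j)])
  have hd_ge_e : ∀ i j, |ee i - ee j| ≤ d i j := by
    intro i j
    rw [habsd]
    calc |ee i - ee j| = Real.sqrt ((ee i - ee j) ^ 2) := (Real.sqrt_sq_eq_abs _).symm
      _ ≤ _ := Real.sqrt_le_sqrt (by nlinarith only [sq_nonneg (mm i + mm j)])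
  have hd_pos : ∀ i j, 0 < d i j :=
    fun i j => lt_of_lt_of_le (by linarith only [hmm_pos i, hmm_pos j]) (hd_ge_m i j)
  have hd_diag : ∀ i, d i i = 2 * mm i := by
    intro i
    have h1 : (ee i - ee i) ^ 2 + (mm i + mm i) ^ 2 = (2 * mm i) ^ 2 := by ring
    rw [habsd, h1, Real.sqrt_sq (by linarith only [hmm_pos i])]
  have hd_cross1 : ∀ a b : Fin N, 2 * T - 2 * Z ≤ d (Sum.inl a) (Sum.inr b) := by
    intro a b
    refine le_trans ?_ (hd_ge_e _ _)
    have h1 : ee (Sum.inl a) - ee (Sum.inr b) = r a + r b + (zc b - zc a) := by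
      simp only [heedef, Sum.elim_inl, Sum.elim_inr]; ring
    rw [h1]
    refine le_trans ?_ (le_abs_self _)
    have ha := abs_le.mp (hZk a)
    have hb := abs_le.mp (hZk b)
    linarith only [hrT a, hrT b, ha.1, ha.2, hb.1, hb.2]
  have hd_cross2 : ∀ a b : Fin N, 2 * T - 2 * Z ≤ d (Sum.inr a) (Sum.inl b) := by
    intro a b
    refine le_trans ?_ (hd_ge_e _ _)
    have h1 : ee (Sum.inr a) - ee (Sum.inl b) = (zc b - zc a) - (r a + r b) := by
      simp only [heedef, Sum.elim_inl, Sum.elim_inr]; ring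
    rw [h1]
    refine le_trans ?_ (neg_le_abs _)
    have ha := abs_le.mp (hZk a)
    have hb := abs_le.mp (hZk b)
    linarith only [hrT a, hrT b, ha.1, ha.2, hb.1, hb.2]
  set num : (Fin N ⊕ Fin N) → (Fin N ⊕ Fin N) → ℝ :=
    fun i j => ‖star (vv0 i) ⬝ᵥ (S i j x).mulVec (vv0 j)‖ with hnumdef
  have habsA : ∀ i j, ‖A i j‖ = num i j / d i j := by
    intro i j
    rw [hA i j, norm_div]
  have hnum_close : ∀ i j, |num i j - g i j| ≤ η := by
    intro i j
    have hdiff : star (vv0 i) ⬝ᵥ (S i j x).mulVec (vv0 j) - star (vv0 i) ⬝ᵥ Γ.mulVec (vv0 j)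
        = star (vv0 i) ⬝ᵥ (S i j x - Γ).mulVec (vv0 j) := by
      rw [Matrix.sub_mulVec, dotProduct_sub]
    have hSb : ∀ a b, ‖(S i j x - Γ) a b‖ ≤ ε := by
      intro a b
      calc ‖(S i j x - Γ) a b‖ = ‖(S i j x - Γ) a b‖ :=
            rfl
        _ ≤ ‖S i j x - Γ‖ := Matrix.norm_entry_le_entrywise_sup_norm _
        _ ≤ ε := by
            refine (hM i j x hx1 ?_).le
            rw [← hLdef]
            exact lt_of_le_of_lt (hRM i j) hxR
    have hb := dot_abs_bound (vv0 i) (vv0 j) (S i j x - Γ) ε hSb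
    have h2 : ‖star (vv0 i) ⬝ᵥ (S i j x - Γ).mulVec (vv0 j)‖ ≤ Cv * Cv * ε := by
      refine le_trans hb ?_
      have := hCvk i
      have := hCvk j
      have h0i : 0 ≤ ∑ a, ‖vv0 i a‖ :=
        Finset.sum_nonneg fun _ _ => norm_nonneg _
      have h0j : 0 ≤ ∑ a, ‖vv0 j a‖ :=
        Finset.sum_nonneg fun _ _ => norm_nonneg _
      have : (∑ a, ‖vv0 i a‖) * (∑ b, ‖vv0 j b‖) ≤ Cv * Cv :=
        mul_le_mul (hCvk i) (hCvk j) h0j hCv0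
      nlinarith only [hεpos.le, this, hCv0]
    calc |num i j - g i j|
        ≤ ‖(star (vv0 i) ⬝ᵥ (S i j x).mulVec (vv0 j))
            - (star (vv0 i) ⬝ᵥ Γ.mulVec (vv0 j))‖ :=
          abs_norm_sub_norm_le _ _
      _ ≤ Cv * Cv * ε := by rw [hdiff]; exact h2
      _ ≤ η := hεCv
  have hnum_le : ∀ i j, num i j ≤ G + η := by
    intro i j
    have h := abs_le.mp (hnum_close i j)
    linarith only [h.1, h.2, hGk i j]
  have hnum_geG : ∀ i j, num i j ≤ g i j + η := by
    intro i j
    have h := abs_le.mp (hnum_close i j)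
    linarith only [h.1, h.2]
  have hkey : ∀ i : Fin N ⊕ Fin N,
      ∑ j ∈ Finset.univ.erase i, ‖A i j‖ < ‖A i i‖ := by
    have hcard : ∀ k : Fin N, (((Finset.univ : Finset (Fin N)).erase k).card : ℝ) ≤ N := by
      intro k
      rw [Finset.card_erase_of_mem (Finset.mem_univ k), Finset.card_univ, Fintype.card_fin]
      exact_mod_cast Nat.sub_le N 1
    rintro (k | k)
    · -- row in the first block
      have hgrow : ∑ j ∈ Finset.univ.erase k, g (Sum.inl k) (Sum.inl j)
          ≤ 1 / 2 * g (Sum.inl k) (Sum.inl k) - δ := by linarith only [hδk k]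
      have hsplit : ∑ j ∈ Finset.univ.erase (Sum.inl k : Fin N ⊕ Fin N),
            ‖A (Sum.inl k) j‖
          = (∑ j ∈ Finset.univ.erase k, ‖A (Sum.inl k) (Sum.inl j)‖)
            + ∑ j : Fin N, ‖A (Sum.inl k) (Sum.inr j)‖ := by
        rw [Finset.sum_erase_eq_sub (Finset.mem_univ _), Fintype.sum_sum_type,
          Finset.sum_erase_eq_sub (Finset.mem_univ k)]
        ring
      have hsame : ∑ j ∈ Finset.univ.erase k, ‖A (Sum.inl k) (Sum.inl j)‖
          ≤ (1 / 2 * g (Sum.inl k) (Sum.inl k) - δ + N * η) / mm (Sum.inl k) := by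
        calc ∑ j ∈ Finset.univ.erase k, ‖A (Sum.inl k) (Sum.inl j)‖
            ≤ ∑ j ∈ Finset.univ.erase k,
                (g (Sum.inl k) (Sum.inl j) + η) / mm (Sum.inl k) := by
              refine Finset.sum_le_sum fun j _ => ?_
              rw [habsA]
              refine div_le_div₀ (by linarith only [hg_nonneg (Sum.inl k) (Sum.inl j), hη])
                (hnum_geG _ _) (hmm_pos _) ?_
              exact le_trans (by linarith only [hmm_pos (Sum.inl j), hmm_pos (Sum.inl k)]) (hd_ge_m _ _)
          _ = ((∑ j ∈ Finset.univ.erase k, g (Sum.inl k) (Sum.inl j))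
                + ((Finset.univ.erase k).card : ℝ) * η) / mm (Sum.inl k) := by
              rw [← Finset.sum_div, Finset.sum_add_distrib, Finset.sum_const, nsmul_eq_mul]
          _ ≤ _ := by
              refine (div_le_div_iff_of_pos_right (hmm_pos _)).mpr ?_
              linarith only [hgrow, mul_le_mul_of_nonneg_right (hcard k) hη.le]
      have hcrossrow : ∑ j : Fin N, ‖A (Sum.inl k) (Sum.inr j)‖
          ≤ N * (G + η) / (2 * T - 2 * Z) := by
        calc ∑ j : Fin N, ‖A (Sum.inl k) (Sum.inr j)‖
            ≤ ∑ _j : Fin N, (G + η) / (2 * T - 2 * Z) := by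
              refine Finset.sum_le_sum fun j _ => ?_
              rw [habsA]
              exact div_le_div₀ (by linarith only [hG0, hη]) (hnum_le _ _) hden0 (hd_cross1 k j)
          _ = N * (G + η) / (2 * T - 2 * Z) := by
              rw [Finset.sum_const, nsmul_eq_mul, Finset.card_univ, Fintype.card_fin,
                mul_div_assoc]
      have hdiag : (g (Sum.inl k) (Sum.inl k) - η) / (2 * mm (Sum.inl k))
          ≤ ‖A (Sum.inl k) (Sum.inl k)‖ := by
        rw [habsA, hd_diag]
        have h := abs_le.mp (hnum_close (Sum.inl k) (Sum.inl k))
        exact (div_le_div_iff_of_pos_right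
          (by linarith only [hmm_pos (Sum.inl k)] : (0:ℝ) < 2 * mm (Sum.inl k))).mpr
          (by linarith only [h.1])
      have hfin : (1 / 2 * g (Sum.inl k) (Sum.inl k) - δ + N * η) / mm (Sum.inl k)
          + N * (G + η) / (2 * T - 2 * Z)
          < (g (Sum.inl k) (Sum.inl k) - η) / (2 * mm (Sum.inl k)) := by
        have hm := hmm_pos (Sum.inl k)
        have hmle := hmm_le (Sum.inl k)
        have hY0 : 0 ≤ N * (G + η) / (2 * T - 2 * Z) :=
          div_nonneg (by nlinarith only [hNc, hG0, hη]) (by linarith only [hden0])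
        have hYm : N * (G + η) / (2 * T - 2 * Z) * (2 * mm (Sum.inl k))
            < 2 * δ - (2 * N + 1) * η := by
          have h2 : N * (G + η) / (2 * T - 2 * Z) * (2 * mm (Sum.inl k))
              ≤ N * (G + η) / (2 * T - 2 * Z) * (2 * (2 * Smax)) :=
            mul_le_mul_of_nonneg_left (by linarith only [hmle]) hY0
          have h3 : N * (G + η) / (2 * T - 2 * Z) * (2 * (2 * Smax))
              = 2 * (2 * Smax * ((N:ℝ) * (G + η) / (2 * T - 2 * Z))) := by ring
          rw [h3] at h2
          linarith only [h2, hcross, hη2]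
        have hmne : mm (Sum.inl k) ≠ 0 := ne_of_gt hm
        have hid : (g (Sum.inl k) (Sum.inl k) - η) / (2 * mm (Sum.inl k))
            = (1 / 2 * g (Sum.inl k) (Sum.inl k) - δ + N * η) / mm (Sum.inl k)
              + (2 * δ - (2 * N + 1) * η) / (2 * mm (Sum.inl k)) := by
          field_simp
          ring
        rw [hid]
        have hlast : N * (G + η) / (2 * T - 2 * Z)
            < (2 * δ - (2 * N + 1) * η) / (2 * mm (Sum.inl k)) := by
          rw [lt_div_iff₀ (by linarith only [hm] : (0:ℝ) < 2 * mm (Sum.inl k))]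
          exact hYm
        linarith only [hlast]
      calc ∑ j ∈ Finset.univ.erase (Sum.inl k : Fin N ⊕ Fin N), ‖A (Sum.inl k) j‖
          = _ := hsplit
        _ ≤ (1 / 2 * g (Sum.inl k) (Sum.inl k) - δ + N * η) / mm (Sum.inl k)
            + N * (G + η) / (2 * T - 2 * Z) := add_le_add hsame hcrossrow
        _ < (g (Sum.inl k) (Sum.inl k) - η) / (2 * mm (Sum.inl k)) := hfin
        _ ≤ ‖A (Sum.inl k) (Sum.inl k)‖ := hdiag
    · -- row in the second block
      have hgrow : ∑ j ∈ Finset.univ.erase k, g (Sum.inr k) (Sum.inr j)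
          ≤ 1 / 2 * g (Sum.inr k) (Sum.inr k) - δ := by
        have e1 : ∑ j ∈ Finset.univ.erase k, g (Sum.inr k) (Sum.inr j)
            = ∑ j ∈ Finset.univ.erase k, g (Sum.inl k) (Sum.inl j) :=
          Finset.sum_congr rfl fun j _ => hgsym k j
        rw [e1, hgsym k k]
        linarith only [hδk k]
      have hsplit : ∑ j ∈ Finset.univ.erase (Sum.inr k : Fin N ⊕ Fin N),
            ‖A (Sum.inr k) j‖
          = (∑ j ∈ Finset.univ.erase k, ‖A (Sum.inr k) (Sum.inr j)‖)
            + ∑ j : Fin N, ‖A (Sum.inr k) (Sum.inl j)‖ := by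
        rw [Finset.sum_erase_eq_sub (Finset.mem_univ _), Fintype.sum_sum_type,
          Finset.sum_erase_eq_sub (Finset.mem_univ k)]
        ring
      have hsame : ∑ j ∈ Finset.univ.erase k, ‖A (Sum.inr k) (Sum.inr j)‖
          ≤ (1 / 2 * g (Sum.inr k) (Sum.inr k) - δ + N * η) / mm (Sum.inr k) := by
        calc ∑ j ∈ Finset.univ.erase k, ‖A (Sum.inr k) (Sum.inr j)‖
            ≤ ∑ j ∈ Finset.univ.erase k,
                (g (Sum.inr k) (Sum.inr j) + η) / mm (Sum.inr k) := by
              refine Finset.sum_le_sum fun j _ => ?_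
              rw [habsA]
              refine div_le_div₀ (by linarith only [hg_nonneg (Sum.inr k) (Sum.inr j), hη])
                (hnum_geG _ _) (hmm_pos _) ?_
              exact le_trans
                (by linarith only [hmm_pos (Sum.inr j), hmm_pos (Sum.inr k)]) (hd_ge_m _ _)
          _ = ((∑ j ∈ Finset.univ.erase k, g (Sum.inr k) (Sum.inr j))
                + ((Finset.univ.erase k).card : ℝ) * η) / mm (Sum.inr k) := by
              rw [← Finset.sum_div, Finset.sum_add_distrib, Finset.sum_const, nsmul_eq_mul]
          _ ≤ _ := by
              refine (div_le_div_iff_of_pos_right (hmm_pos _)).mpr ?_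
              linarith only [hgrow, mul_le_mul_of_nonneg_right (hcard k) hη.le]
      have hcrossrow : ∑ j : Fin N, ‖A (Sum.inr k) (Sum.inl j)‖
          ≤ N * (G + η) / (2 * T - 2 * Z) := by
        calc ∑ j : Fin N, ‖A (Sum.inr k) (Sum.inl j)‖
            ≤ ∑ _j : Fin N, (G + η) / (2 * T - 2 * Z) := by
              refine Finset.sum_le_sum fun j _ => ?_
              rw [habsA]
              exact div_le_div₀ (by linarith only [hG0, hη]) (hnum_le _ _) hden0 (hd_cross2 k j)
          _ = N * (G + η) / (2 * T - 2 * Z) := by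
              rw [Finset.sum_const, nsmul_eq_mul, Finset.card_univ, Fintype.card_fin,
                mul_div_assoc]
      have hdiag : (g (Sum.inr k) (Sum.inr k) - η) / (2 * mm (Sum.inr k))
          ≤ ‖A (Sum.inr k) (Sum.inr k)‖ := by
        rw [habsA, hd_diag]
        have h := abs_le.mp (hnum_close (Sum.inr k) (Sum.inr k))
        exact (div_le_div_iff_of_pos_right
          (by linarith only [hmm_pos (Sum.inr k)] : (0:ℝ) < 2 * mm (Sum.inr k))).mpr
          (by linarith only [h.1])
      have hfin : (1 / 2 * g (Sum.inr k) (Sum.inr k) - δ + N * η) / mm (Sum.inr k)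
          + N * (G + η) / (2 * T - 2 * Z)
          < (g (Sum.inr k) (Sum.inr k) - η) / (2 * mm (Sum.inr k)) := by
        have hm := hmm_pos (Sum.inr k)
        have hmle := hmm_le (Sum.inr k)
        have hY0 : 0 ≤ N * (G + η) / (2 * T - 2 * Z) :=
          div_nonneg (by nlinarith only [hNc, hG0, hη]) (by linarith only [hden0])
        have hYm : N * (G + η) / (2 * T - 2 * Z) * (2 * mm (Sum.inr k))
            < 2 * δ - (2 * N + 1) * η := by
          have h2 : N * (G + η) / (2 * T - 2 * Z) * (2 * mm (Sum.inr k))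
              ≤ N * (G + η) / (2 * T - 2 * Z) * (2 * (2 * Smax)) :=
            mul_le_mul_of_nonneg_left (by linarith only [hmle]) hY0
          have h3 : N * (G + η) / (2 * T - 2 * Z) * (2 * (2 * Smax))
              = 2 * (2 * Smax * ((N:ℝ) * (G + η) / (2 * T - 2 * Z))) := by ring
          rw [h3] at h2
          linarith only [h2, hcross, hη2]
        have hmne : mm (Sum.inr k) ≠ 0 := ne_of_gt hm
        have hid : (g (Sum.inr k) (Sum.inr k) - η) / (2 * mm (Sum.inr k))
            = (1 / 2 * g (Sum.inr k) (Sum.inr k) - δ + N * η) / mm (Sum.inr k)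
              + (2 * δ - (2 * N + 1) * η) / (2 * mm (Sum.inr k)) := by
          field_simp
          ring
        rw [hid]
        have hlast : N * (G + η) / (2 * T - 2 * Z)
            < (2 * δ - (2 * N + 1) * η) / (2 * mm (Sum.inr k)) := by
          rw [lt_div_iff₀ (by linarith only [hm] : (0:ℝ) < 2 * mm (Sum.inr k))]
          exact hYm
        linarith only [hlast]
      calc ∑ j ∈ Finset.univ.erase (Sum.inr k : Fin N ⊕ Fin N), ‖A (Sum.inr k) j‖
          = _ := hsplit
        _ ≤ (1 / 2 * g (Sum.inr k) (Sum.inr k) - δ + N * η) / mm (Sum.inr k)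
            + N * (G + η) / (2 * T - 2 * Z) := add_le_add hsame hcrossrow
        _ < (g (Sum.inr k) (Sum.inr k) - η) / (2 * mm (Sum.inr k)) := hfin
        _ ≤ ‖A (Sum.inr k) (Sum.inr k)‖ := hdiag
  refine ⟨hkey, det_ne_zero_of_sum_row_lt_diag fun i => ?_⟩
  simpa using hkey i
end

section
/- (Recovery of the Kerr metric.) Let m, s > 0 and set a = √(m²+s²). Put A = s, B = a, n₁ = m/2, n₂ = 0, and for real r, θ define F = A²((r−m)²+s²) − B² s² sin²θ and G = F + 2s²(B²−A²) + 4 s n₁ A (r−m) − 4 s² B n₂ cos θ. Then whenever r² + a² cos²θ ≠ 0 (equivalently G ≠ 0): F/G = (r² − 2mr + a² cos²θ)/(r² + a² cos²θ) and (4 s A n₂ (r−m) + 4 B n₁ s² cos θ)/G = (2 m a cos θ)/(r² + a² cos²θ). Moreover the real numbers α = √((a+s)/2) and δ = √((a−s)/2) satisfy α² − δ² = s, α² + δ² = a, and α·δ = m/2. -/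
/-- recovery of the Kerr metric: with `a = √(m²+s²)`, `A = s`, `B = a`,
`n₁ = m/2`, `n₂ = 0`, `F = A²((r−m)²+s²) − B²s²sin²θ` and
`G = F + 2s²(B²−A²) + 4sn₁A(r−m) − 4s²Bn₂cos θ`, whenever `r² + a²cos²θ ≠ 0` one has
`F/G = (r² − 2mr + a²cos²θ)/(r² + a²cos²θ)` and
`(4sAn₂(r−m) + 4Bn₁s²cos θ)/G = 2ma cos θ/(r² + a²cos²θ)`; moreover
`α = √((a+s)/2)` and `δ = √((a−s)/2)` satisfy `α² − δ² = s`, `α² + δ² = a`,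
`α·δ = m/2`. -/
theorem statement16 (m s : ℝ) (hm : 0 < m) (hs : 0 < s) (r θ : ℝ) :
    let a : ℝ := Real.sqrt (m ^ 2 + s ^ 2)
    let A : ℝ := s
    let B : ℝ := a
    let n₁ : ℝ := m / 2
    let n₂ : ℝ := 0
    let F : ℝ := A ^ 2 * ((r - m) ^ 2 + s ^ 2) - B ^ 2 * s ^ 2 * Real.sin θ ^ 2
    let G : ℝ := F + 2 * s ^ 2 * (B ^ 2 - A ^ 2) + 4 * s * n₁ * A * (r - m) -
      4 * s ^ 2 * B * n₂ * Real.cos θ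
    let α : ℝ := Real.sqrt ((a + s) / 2)
    let δ : ℝ := Real.sqrt ((a - s) / 2)
    r ^ 2 + a ^ 2 * Real.cos θ ^ 2 ≠ 0 →
    (F / G = (r ^ 2 - 2 * m * r + a ^ 2 * Real.cos θ ^ 2) /
        (r ^ 2 + a ^ 2 * Real.cos θ ^ 2) ∧
      (4 * s * A * n₂ * (r - m) + 4 * B * n₁ * s ^ 2 * Real.cos θ) / G =
        (2 * m * a * Real.cos θ) / (r ^ 2 + a ^ 2 * Real.cos θ ^ 2) ∧
      α ^ 2 - δ ^ 2 = s ∧ α ^ 2 + δ ^ 2 = a ∧ α * δ = m / 2) := by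
  intro a A B n₁ n₂ F G α δ h
  have ha2 : a ^ 2 = m ^ 2 + s ^ 2 := Real.sq_sqrt (by positivity)
  have ha : 0 < a := Real.sqrt_pos.mpr (by positivity)
  have hsa : s ≤ a := by
    nlinarith [sq_nonneg (a - s), sq_nonneg (a + s)]
  have hsin : Real.sin θ ^ 2 = 1 - Real.cos θ ^ 2 := by
    have := Real.sin_sq_add_cos_sq θ; linarith
  have hF : F = s ^ 2 * (r ^ 2 - 2 * m * r + a ^ 2 * Real.cos θ ^ 2) := by
    simp only [F, A, B, hsin]; ring_nf; nlinarith [ha2]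
  have hG : G = s ^ 2 * (r ^ 2 + a ^ 2 * Real.cos θ ^ 2) := by
    simp only [G, F, A, B, n₁, n₂, hsin]; ring_nf; nlinarith [ha2]
  have hs2 : (s : ℝ) ^ 2 ≠ 0 := by positivity
  have hα : α ^ 2 = (a + s) / 2 := Real.sq_sqrt (by linarith)
  have hδ : δ ^ 2 = (a - s) / 2 := Real.sq_sqrt (by linarith)
  refine ⟨?_, ?_, by rw [hα, hδ]; ring, by rw [hα, hδ]; ring, ?_⟩
  · rw [hF, hG, mul_div_mul_left _ _ hs2]
  · simp only [n₁, n₂, B, hG]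
    rw [show 4 * s * A * 0 * (r - m) + 4 * a * (m / 2) * s ^ 2 * Real.cos θ
        = s ^ 2 * (2 * m * a * Real.cos θ) by ring, mul_div_mul_left _ _ hs2]
  · have : α * δ = Real.sqrt ((a + s) / 2 * ((a - s) / 2)) :=
      (Real.sqrt_mul (by linarith) _).symm
    rw [this, show (a + s) / 2 * ((a - s) / 2) = (a ^ 2 - s ^ 2) / 4 by ring, ha2,
      show m ^ 2 + s ^ 2 - s ^ 2 = m ^ 2 from by ring,
      show (m : ℝ) ^ 2 / 4 = (m / 2) ^ 2 by ring, Real.sqrt_sq (by linarith)]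
end
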